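/- arXiv:2307.05124 — 4 statements merged into one kernel-verified Lean document; each statement's English description precedes it below -/
import Mathlib

section
/- Let b : (0,∞) → (0,∞) be slowly varying, α > 0, and q ∈ (0,∞]. Then for all t > 0: ‖τ^{α - 1/q} b(τ)‖_{L_q(0,t)} ≈ t^α b(t) and ‖τ^{-α - 1/q} b(τ)‖_{L_q(t,∞)} ≈ t^{-α} b(t), with equivalence constants independent of t. -/
open Set MeasureTheory ENNReal

/-- A measurable function `b : (0,∞) → (0,∞)` is slowly varying if for each
`ε > 0` the function `t^ε b(t)` is equivalent (up to positive multiplicative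
constants) to a non-decreasing function and `t^{-ε} b(t)` is equivalent to a
non-increasing function on `(0,∞)`. -/
def IsSlowlyVarying (b : ℝ → ℝ) : Prop :=
  Measurable b ∧ (∀ t : ℝ, 0 < t → 0 < b t) ∧
  ∀ ε : ℝ, 0 < ε →
    (∃ (g : ℝ → ℝ) (c C : ℝ), 0 < c ∧ 0 < C ∧ MonotoneOn g (Ioi 0) ∧
      ∀ t : ℝ, 0 < t → c * g t ≤ t ^ ε * b t ∧ t ^ ε * b t ≤ C * g t) ∧
    (∃ (g : ℝ → ℝ) (c C : ℝ), 0 < c ∧ 0 < C ∧ AntitoneOn g (Ioi 0) ∧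
      ∀ t : ℝ, 0 < t → c * g t ≤ t ^ (-ε) * b t ∧ t ^ (-ε) * b t ≤ C * g t)


lemma lint_Ioo (s t : ℝ) (hs : 0 < s) (ht : 0 < t) :
    ∫⁻ x in Ioo (0:ℝ) t, ENNReal.ofReal (x ^ (s - 1)) = ENNReal.ofReal (t ^ s / s) := by
  rw [Measure.restrict_congr_set Ioo_ae_eq_Ioc]
  have hint : IntegrableOn (fun x : ℝ => x ^ (s - 1)) (Ioc 0 t) := by
    have := (intervalIntegral.intervalIntegrable_rpow' (a := 0) (b := t) (r := s - 1) (by linarith))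
    rwa [intervalIntegrable_iff_integrableOn_Ioc_of_le ht.le] at this
  rw [← ofReal_integral_eq_lintegral_ofReal hint]
  · rw [← intervalIntegral.integral_of_le ht.le, integral_rpow (Or.inl (by linarith))]
    norm_num
    rw [Real.zero_rpow hs.ne']
    ring_nf
  · filter_upwards [ae_restrict_mem measurableSet_Ioc] with x hx
    exact Real.rpow_nonneg hx.1.le _

lemma lint_Ioi (s t : ℝ) (hs : 0 < s) (ht : 0 < t) :
    ∫⁻ x in Ioi t, ENNReal.ofReal (x ^ (-s - 1)) = ENNReal.ofReal (t ^ (-s) / s) := by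
  have hint : IntegrableOn (fun x : ℝ => x ^ (-s - 1)) (Ioi t) :=
    integrableOn_Ioi_rpow_of_lt (by linarith) ht
  rw [← ofReal_integral_eq_lintegral_ofReal hint]
  · rw [integral_Ioi_rpow_of_lt (by linarith) ht]
    norm_num
  · filter_upwards [ae_restrict_mem measurableSet_Ioi] with x hx
    exact Real.rpow_nonneg (ht.le.trans (le_of_lt hx)) _

lemma elp_pow_Ioo (q : ℝ≥0∞) (hq0 : q ≠ 0) (hqt : q ≠ ∞) (s t : ℝ) (hs : 0 < s) (ht : 0 < t) :
    eLpNorm (fun x : ℝ => x ^ (s - 1 / q.toReal)) q (volume.restrict (Ioo 0 t)) =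
      ENNReal.ofReal ((t ^ (s * q.toReal) / (s * q.toReal)) ^ (1 / q.toReal)) := by
  have hp : 0 < q.toReal := ENNReal.toReal_pos hq0 hqt
  rw [eLpNorm_eq_lintegral_rpow_enorm_toReal hq0 hqt]
  have hcong : ∫⁻ x in Ioo (0:ℝ) t, ‖x ^ (s - 1 / q.toReal)‖ₑ ^ q.toReal
      = ∫⁻ x in Ioo (0:ℝ) t, ENNReal.ofReal (x ^ (s * q.toReal - 1)) := by
    apply setLIntegral_congr_fun measurableSet_Ioo
    intro x hx; dsimp only
    rw [Real.enorm_eq_ofReal (Real.rpow_nonneg hx.1.le _),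
      ENNReal.ofReal_rpow_of_nonneg (Real.rpow_nonneg hx.1.le _) hp.le,
      ← Real.rpow_mul hx.1.le]
    congr 2
    field_simp
  rw [hcong, lint_Ioo (s * q.toReal) t (by positivity) ht,
    ← ENNReal.ofReal_rpow_of_nonneg (by positivity) (by positivity)]

lemma elp_pow_Ioi (q : ℝ≥0∞) (hq0 : q ≠ 0) (hqt : q ≠ ∞) (s t : ℝ) (hs : 0 < s) (ht : 0 < t) :
    eLpNorm (fun x : ℝ => x ^ (-s - 1 / q.toReal)) q (volume.restrict (Ioi t)) =
      ENNReal.ofReal ((t ^ (-(s * q.toReal)) / (s * q.toReal)) ^ (1 / q.toReal)) := by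
  have hp : 0 < q.toReal := ENNReal.toReal_pos hq0 hqt
  rw [eLpNorm_eq_lintegral_rpow_enorm_toReal hq0 hqt]
  have hcong : ∫⁻ x in Ioi t, ‖x ^ (-s - 1 / q.toReal)‖ₑ ^ q.toReal
      = ∫⁻ x in Ioi t, ENNReal.ofReal (x ^ (-(s * q.toReal) - 1)) := by
    apply setLIntegral_congr_fun measurableSet_Ioi
    intro x hx; dsimp only
    have hx0 : (0:ℝ) < x := ht.trans hx
    rw [Real.enorm_eq_ofReal (Real.rpow_nonneg hx0.le _),
      ENNReal.ofReal_rpow_of_nonneg (Real.rpow_nonneg hx0.le _) hp.le,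
      ← Real.rpow_mul hx0.le]
    congr 2
    field_simp
  rw [hcong, lint_Ioi (s * q.toReal) t (by positivity) ht,
    ← ENNReal.ofReal_rpow_of_nonneg (by positivity) (by positivity)]

lemma alg1 (t u v p : ℝ) (ht : 0 < t) (hv : 0 < v) (hp : 0 < p) :
    (t ^ (u * p) / v) ^ (1 / p) = v ^ (-(1 / p)) * t ^ u := by
  rw [div_eq_mul_inv, Real.mul_rpow (by positivity) (by positivity),
    ← Real.rpow_mul ht.le, Real.inv_rpow hv.le, ← Real.rpow_neg hv.le, mul_comm]
  congr 2
  field_simp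

lemma low_fin (q : ℝ≥0∞) (hq0 : q ≠ 0) (hqt : q ≠ ∞) (f : ℝ → ℝ) (K : ℝ) (hK : 0 ≤ K)
    (A : Set ℝ) (hA : MeasurableSet A) (hbd : ∀ x ∈ A, K ≤ f x) :
    ENNReal.ofReal K * (volume A) ^ (1 / q.toReal) ≤ eLpNorm f q (volume.restrict A) := by
  have hp : 0 < q.toReal := ENNReal.toReal_pos hq0 hqt
  rw [eLpNorm_eq_lintegral_rpow_enorm_toReal hq0 hqt]
  have h1 : (ENNReal.ofReal K) ^ q.toReal * volume A ≤
      ∫⁻ x in A, ‖f x‖ₑ ^ q.toReal := by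
    rw [← setLIntegral_const]
    refine lintegral_mono_ae ?_
    filter_upwards [ae_restrict_mem hA] with x hx
    exact ENNReal.rpow_le_rpow
      (le_trans (ENNReal.ofReal_le_ofReal (hbd x hx)) (Real.ofReal_le_enorm _)) hp.le
  calc ENNReal.ofReal K * (volume A) ^ (1 / q.toReal)
      = ((ENNReal.ofReal K) ^ q.toReal * volume A) ^ (1 / q.toReal) := by
        rw [ENNReal.mul_rpow_of_nonneg _ _ (by positivity), ← ENNReal.rpow_mul,
          mul_one_div, div_self hp.ne', ENNReal.rpow_one]
    _ ≤ _ := ENNReal.rpow_le_rpow h1 (by positivity)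

lemma low_top (f : ℝ → ℝ) (K : ℝ) (A : Set ℝ) (hA : MeasurableSet A)
    (hpos : volume A ≠ 0) (hbd : ∀ x ∈ A, K ≤ f x) :
    ENNReal.ofReal K ≤ eLpNorm f ∞ (volume.restrict A) := by
  rw [eLpNorm_exponent_top, eLpNormEssSup]
  have hne : volume.restrict A ≠ 0 := by
    simpa [Measure.restrict_eq_zero] using hpos
  calc ENNReal.ofReal K = essSup (fun _ : ℝ => ENNReal.ofReal K) (volume.restrict A) :=
        (essSup_const _ hne).symm
    _ ≤ _ := by
        refine essSup_mono_ae ?_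
        filter_upwards [ae_restrict_mem hA] with x hx
        exact le_trans (ENNReal.ofReal_le_ofReal (hbd x hx)) (Real.ofReal_le_enorm _)

lemma pow_lb1 (t s τ : ℝ) (ht : 0 < t) (h1 : t/2 ≤ τ) (h2 : τ ≤ t) :
    min (2 ^ (-s)) 1 * t ^ s ≤ τ ^ s := by
  have hτ : 0 < τ := lt_of_lt_of_le (by linarith) h1
  rcases le_or_gt 0 s with hs | hs
  · have : (t/2) ^ s ≤ τ ^ s := Real.rpow_le_rpow (by positivity) h1 hs
    calc min (2 ^ (-s)) 1 * t ^ s ≤ 2 ^ (-s) * t ^ s := by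
          exact mul_le_mul_of_nonneg_right (min_le_left _ _) (by positivity)
      _ = (t/2) ^ s := by
          rw [Real.div_rpow ht.le (by norm_num), Real.rpow_neg (by norm_num), div_eq_mul_inv,
            mul_comm]
      _ ≤ τ ^ s := this
  · have : t ^ s ≤ τ ^ s := Real.rpow_le_rpow_of_nonpos hτ h2 hs.le
    calc min (2 ^ (-s)) 1 * t ^ s ≤ 1 * t ^ s := by
          exact mul_le_mul_of_nonneg_right (min_le_right _ _) (by positivity)
      _ ≤ τ ^ s := by rw [one_mul]; exact this

lemma pow_lb2 (t s τ : ℝ) (ht : 0 < t) (h1 : t ≤ τ) (h2 : τ ≤ 2*t) :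
    min (2 ^ s) 1 * t ^ s ≤ τ ^ s := by
  have hτ : 0 < τ := lt_of_lt_of_le ht h1
  rcases le_or_gt 0 s with hs | hs
  · have : t ^ s ≤ τ ^ s := Real.rpow_le_rpow ht.le h1 hs
    calc min (2 ^ s) 1 * t ^ s ≤ 1 * t ^ s := by
          exact mul_le_mul_of_nonneg_right (min_le_right _ _) (by positivity)
      _ ≤ τ ^ s := by rwa [one_mul]
  · have : (2*t) ^ s ≤ τ ^ s := Real.rpow_le_rpow_of_nonpos hτ h2 hs.le
    calc min (2 ^ s) 1 * t ^ s ≤ 2 ^ s * t ^ s := by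
          exact mul_le_mul_of_nonneg_right (min_le_left _ _) (by positivity)
      _ = (2*t) ^ s := (Real.mul_rpow (by norm_num) ht.le).symm
      _ ≤ τ ^ s := this

lemma tmul (t : ℝ) (ht : 0 < t) {a b c : ℝ} (h : a + b = c) : t ^ a * t ^ b = t ^ c := by
  rw [← Real.rpow_add ht, h]

lemma elp_const_mul (K : ℝ) (hK : 0 ≤ K) (f : ℝ → ℝ) (q : ℝ≥0∞) (μ : Measure ℝ) :
    eLpNorm (fun x => K * f x) q μ = ENNReal.ofReal K * eLpNorm f q μ := by
  have h : (fun x => K * f x) = K • f := rfl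
  rw [h, eLpNorm_const_smul, Real.enorm_eq_ofReal hK]

lemma elp_mono_on (f g : ℝ → ℝ) (A : Set ℝ) (hA : MeasurableSet A)
    (hbd : ∀ x ∈ A, ‖f x‖ ≤ ‖g x‖) (q : ℝ≥0∞) :
    eLpNorm f q (volume.restrict A) ≤ eLpNorm g q (volume.restrict A) :=
  eLpNorm_mono_ae ((ae_restrict_iff' hA).2 (ae_of_all _ hbd))

/-- If `b` is slowly varying, `α > 0`, and `q ∈ (0,∞]`, then for all
`t > 0`, `‖τ^{α-1/q} b(τ)‖_{L_q(0,t)} ≈ t^α b(t)` and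
`‖τ^{-α-1/q} b(τ)‖_{L_q(t,∞)} ≈ t^{-α} b(t)`, with equivalence constants
independent of `t`. (For `q = ∞` one has `1/q = 0` and the `L_q` norm is the
essential supremum, as encoded by `eLpNorm`.) -/
theorem slowly_varying_Lq_norms (b : ℝ → ℝ) (hb : IsSlowlyVarying b)
    (α : ℝ) (hα : 0 < α) (q : ℝ≥0∞) (hq : 0 < q) :
    ∃ c C : ℝ, 0 < c ∧ 0 < C ∧ ∀ t : ℝ, 0 < t →
      (ENNReal.ofReal (c * (t ^ α * b t)) ≤
          eLpNorm (fun τ : ℝ => τ ^ (α - (1 / q).toReal) * b τ) q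
            (volume.restrict (Ioo 0 t)) ∧
        eLpNorm (fun τ : ℝ => τ ^ (α - (1 / q).toReal) * b τ) q
            (volume.restrict (Ioo 0 t)) ≤
          ENNReal.ofReal (C * (t ^ α * b t))) ∧
      (ENNReal.ofReal (c * (t ^ (-α) * b t)) ≤
          eLpNorm (fun τ : ℝ => τ ^ (-α - (1 / q).toReal) * b τ) q
            (volume.restrict (Ioi t)) ∧
        eLpNorm (fun τ : ℝ => τ ^ (-α - (1 / q).toReal) * b τ) q
            (volume.restrict (Ioi t)) ≤
          ENNReal.ofReal (C * (t ^ (-α) * b t))) := by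
  obtain ⟨hbm, hbp, hsv⟩ := hb
  obtain ⟨⟨g, c₁, C₁, hc₁, hC₁, hgm, hg⟩, ⟨h, c₂, C₂, hc₂, hC₂, hha, hh⟩⟩ :=
    hsv (α/2) (by positivity)
  -- positivity of g and h on (0,∞)
  have hgpos : ∀ t : ℝ, 0 < t → 0 < g t := fun t ht => by
    have := (hg t ht).2; nlinarith [Real.rpow_pos_of_pos ht (α/2), hbp t ht]
  have hhpos : ∀ t : ℝ, 0 < t → 0 < h t := fun t ht => by
    have := (hh t ht).2; nlinarith [Real.rpow_pos_of_pos ht (-(α/2)), hbp t ht]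
  -- the four key comparison facts
  have kUp : ∀ t τ : ℝ, 0 < t → 0 < τ → τ ≤ t →
      τ ^ (α/2) * b τ ≤ (C₁/c₁) * (t ^ (α/2) * b t) := by
    intro t τ ht hτ hτt
    have e1 := (hg τ hτ).2
    have e2 : g τ ≤ g t := hgm (mem_Ioi.2 hτ) (mem_Ioi.2 ht) hτt
    have e3 := (hg t ht).1
    calc τ ^ (α/2) * b τ ≤ C₁ * g τ := e1
      _ ≤ C₁ * g t := mul_le_mul_of_nonneg_left e2 hC₁.le
      _ = (C₁/c₁) * (c₁ * g t) := by field_simp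
      _ ≤ (C₁/c₁) * (t ^ (α/2) * b t) := mul_le_mul_of_nonneg_left e3 (by positivity)
  have kLow : ∀ t τ : ℝ, 0 < t → 0 < τ → τ ≤ t →
      (c₂/C₂) * (t ^ (-(α/2)) * b t) ≤ τ ^ (-(α/2)) * b τ := by
    intro t τ ht hτ hτt
    have e1 := (hh τ hτ).1
    have e2 : h t ≤ h τ := hha (mem_Ioi.2 hτ) (mem_Ioi.2 ht) hτt
    have e3 := (hh t ht).2
    calc (c₂/C₂) * (t ^ (-(α/2)) * b t) ≤ (c₂/C₂) * (C₂ * h t) :=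
          mul_le_mul_of_nonneg_left e3 (by positivity)
      _ = c₂ * h t := by field_simp
      _ ≤ c₂ * h τ := mul_le_mul_of_nonneg_left e2 hc₂.le
      _ ≤ τ ^ (-(α/2)) * b τ := e1
  have kUp' : ∀ t τ : ℝ, 0 < t → t ≤ τ →
      τ ^ (-(α/2)) * b τ ≤ (C₂/c₂) * (t ^ (-(α/2)) * b t) := by
    intro t τ ht hτt
    have hτ : 0 < τ := lt_of_lt_of_le ht hτt
    have e1 := (hh τ hτ).2
    have e2 : h τ ≤ h t := hha (mem_Ioi.2 ht) (mem_Ioi.2 hτ) hτt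
    have e3 := (hh t ht).1
    calc τ ^ (-(α/2)) * b τ ≤ C₂ * h τ := e1
      _ ≤ C₂ * h t := mul_le_mul_of_nonneg_left e2 hC₂.le
      _ = (C₂/c₂) * (c₂ * h t) := by field_simp
      _ ≤ (C₂/c₂) * (t ^ (-(α/2)) * b t) := mul_le_mul_of_nonneg_left e3 (by positivity)
  have kLow' : ∀ t τ : ℝ, 0 < t → t ≤ τ →
      (c₁/C₁) * (t ^ (α/2) * b t) ≤ τ ^ (α/2) * b τ := by
    intro t τ ht hτt
    have hτ : 0 < τ := lt_of_lt_of_le ht hτt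
    have e1 := (hg τ hτ).1
    have e2 : g t ≤ g τ := hgm (mem_Ioi.2 ht) (mem_Ioi.2 hτ) hτt
    have e3 := (hg t ht).2
    calc (c₁/C₁) * (t ^ (α/2) * b t) ≤ (c₁/C₁) * (C₁ * g t) :=
          mul_le_mul_of_nonneg_left e3 (by positivity)
      _ = c₁ * g t := by field_simp
      _ ≤ c₁ * g τ := mul_le_mul_of_nonneg_left e2 hc₁.le
      _ ≤ τ ^ (α/2) * b τ := e1
  rcases eq_or_ne q ∞ with hqtop | hqtop
  · subst hqtop
    have hr0 : (1 / (⊤:ℝ≥0∞)).toReal = 0 := by simp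
    refine ⟨min ((c₂/C₂) * min ((2:ℝ) ^ (-(α + α/2))) 1)
        ((c₁/C₁) * min ((2:ℝ) ^ (-α - α/2)) 1),
      max (C₁/c₁) (C₂/c₂), by positivity, by positivity, fun t ht => ?_⟩
    have hbt := hbp t ht
    refine ⟨⟨?_, ?_⟩, ?_, ?_⟩
    · -- lower bound on Ioo 0 t
      have hbd : ∀ τ ∈ Ioo (t/2) t,
          ((c₂/C₂) * min ((2:ℝ) ^ (-(α + α/2))) 1) * (t ^ α * b t) ≤
            τ ^ (α - (1 / (⊤:ℝ≥0∞)).toReal) * b τ := by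
        intro τ hτ'
        have hτ : 0 < τ := lt_trans (by positivity) hτ'.1
        rw [hr0, sub_zero]
        have split : τ ^ α * b τ = τ ^ (α + α/2) * (τ ^ (-(α/2)) * b τ) := by
          rw [← mul_assoc, tmul τ hτ (by ring)]
        rw [split]
        have p1 : min ((2:ℝ) ^ (-(α + α/2))) 1 * t ^ (α + α/2) ≤ τ ^ (α + α/2) :=
          pow_lb1 t (α + α/2) τ ht hτ'.1.le hτ'.2.le
        have p2 := kLow t τ ht hτ hτ'.2.le
        calc ((c₂/C₂) * min ((2:ℝ) ^ (-(α + α/2))) 1) * (t ^ α * b t)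
            = (min ((2:ℝ) ^ (-(α + α/2))) 1 * t ^ (α + α/2)) *
                ((c₂/C₂) * (t ^ (-(α/2)) * b t)) := by
              rw [← tmul t ht (show (α + α/2) + -(α/2) = α by ring)]; ring
          _ ≤ (min ((2:ℝ) ^ (-(α + α/2))) 1 * t ^ (α + α/2)) * (τ ^ (-(α/2)) * b τ) :=
              mul_le_mul_of_nonneg_left p2 (by positivity)
          _ ≤ τ ^ (α + α/2) * (τ ^ (-(α/2)) * b τ) :=
              mul_le_mul_of_nonneg_right p1
                (mul_nonneg (Real.rpow_nonneg hτ.le _) (hbp τ hτ).le)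
      calc ENNReal.ofReal (min ((c₂/C₂) * min ((2:ℝ) ^ (-(α + α/2))) 1)
              ((c₁/C₁) * min ((2:ℝ) ^ (-α - α/2)) 1) * (t ^ α * b t))
          ≤ ENNReal.ofReal (((c₂/C₂) * min ((2:ℝ) ^ (-(α + α/2))) 1) * (t ^ α * b t)) :=
            ENNReal.ofReal_le_ofReal (mul_le_mul_of_nonneg_right (min_le_left _ _)
              (mul_nonneg (Real.rpow_nonneg ht.le _) hbt.le))
        _ ≤ eLpNorm (fun τ : ℝ => τ ^ (α - (1 / (⊤:ℝ≥0∞)).toReal) * b τ) ⊤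
              (volume.restrict (Ioo (t/2) t)) := by
            apply low_top _ _ _ measurableSet_Ioo _ hbd
            rw [Real.volume_Ioo]
            exact (ENNReal.ofReal_pos.2 (by linarith)).ne'
        _ ≤ _ := eLpNorm_mono_measure _ (Measure.restrict_mono
              (Ioo_subset_Ioo_left (by linarith)) le_rfl)
    · -- upper bound on Ioo 0 t
      have hbd : ∀ᵐ τ ∂(volume.restrict (Ioo 0 t)),
          ‖τ ^ (α - (1 / (⊤:ℝ≥0∞)).toReal) * b τ‖ ≤ (C₁/c₁) * (t ^ α * b t) := by
        rw [ae_restrict_iff' measurableSet_Ioo]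
        refine ae_of_all _ fun τ hτ' => ?_
        have hτ : 0 < τ := hτ'.1
        rw [hr0, sub_zero, Real.norm_eq_abs,
          abs_of_nonneg (mul_nonneg (Real.rpow_nonneg hτ.le _) (hbp τ hτ).le)]
        have split : τ ^ α * b τ = τ ^ (α/2) * (τ ^ (α/2) * b τ) := by
          rw [← mul_assoc, tmul τ hτ (by ring)]
        rw [split]
        calc τ ^ (α/2) * (τ ^ (α/2) * b τ)
            ≤ τ ^ (α/2) * ((C₁/c₁) * (t ^ (α/2) * b t)) :=
              mul_le_mul_of_nonneg_left (kUp t τ ht hτ hτ'.2.le) (Real.rpow_nonneg hτ.le _)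
          _ ≤ t ^ (α/2) * ((C₁/c₁) * (t ^ (α/2) * b t)) :=
              mul_le_mul_of_nonneg_right (Real.rpow_le_rpow hτ.le hτ'.2.le (by positivity))
                (mul_nonneg (by positivity) (mul_nonneg (Real.rpow_nonneg ht.le _) hbt.le))
          _ = (C₁/c₁) * (t ^ α * b t) := by
              rw [← tmul t ht (show α/2 + α/2 = α by ring)]; ring
      calc eLpNorm (fun τ : ℝ => τ ^ (α - (1 / (⊤:ℝ≥0∞)).toReal) * b τ) ⊤
            (volume.restrict (Ioo 0 t))
          ≤ ENNReal.ofReal ((C₁/c₁) * (t ^ α * b t)) := by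
            rw [eLpNorm_exponent_top]; exact eLpNormEssSup_le_of_ae_bound hbd
        _ ≤ _ := ENNReal.ofReal_le_ofReal (mul_le_mul_of_nonneg_right (le_max_left _ _)
              (mul_nonneg (Real.rpow_nonneg ht.le _) hbt.le))
    · -- lower bound on Ioi t
      have hbd : ∀ τ ∈ Ioo t (2*t),
          ((c₁/C₁) * min ((2:ℝ) ^ (-α - α/2)) 1) * (t ^ (-α) * b t) ≤
            τ ^ (-α - (1 / (⊤:ℝ≥0∞)).toReal) * b τ := by
        intro τ hτ'
        have hτ : 0 < τ := lt_trans ht hτ'.1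
        rw [hr0, sub_zero]
        have split : τ ^ (-α) * b τ = τ ^ (-α - α/2) * (τ ^ (α/2) * b τ) := by
          rw [← mul_assoc, tmul τ hτ (show (-α - α/2) + α/2 = -α by ring)]
        rw [split]
        have p1 : min ((2:ℝ) ^ (-α - α/2)) 1 * t ^ (-α - α/2) ≤ τ ^ (-α - α/2) :=
          pow_lb2 t (-α - α/2) τ ht hτ'.1.le hτ'.2.le
        have p2 := kLow' t τ ht hτ'.1.le
        calc ((c₁/C₁) * min ((2:ℝ) ^ (-α - α/2)) 1) * (t ^ (-α) * b t)
            = (min ((2:ℝ) ^ (-α - α/2)) 1 * t ^ (-α - α/2)) *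
                ((c₁/C₁) * (t ^ (α/2) * b t)) := by
              rw [← tmul t ht (show (-α - α/2) + α/2 = -α by ring)]; ring
          _ ≤ (min ((2:ℝ) ^ (-α - α/2)) 1 * t ^ (-α - α/2)) * (τ ^ (α/2) * b τ) :=
              mul_le_mul_of_nonneg_left p2 (by positivity)
          _ ≤ τ ^ (-α - α/2) * (τ ^ (α/2) * b τ) :=
              mul_le_mul_of_nonneg_right p1
                (mul_nonneg (Real.rpow_nonneg hτ.le _) (hbp τ hτ).le)
      calc ENNReal.ofReal (min ((c₂/C₂) * min ((2:ℝ) ^ (-(α + α/2))) 1)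
              ((c₁/C₁) * min ((2:ℝ) ^ (-α - α/2)) 1) * (t ^ (-α) * b t))
          ≤ ENNReal.ofReal (((c₁/C₁) * min ((2:ℝ) ^ (-α - α/2)) 1) * (t ^ (-α) * b t)) :=
            ENNReal.ofReal_le_ofReal (mul_le_mul_of_nonneg_right (min_le_right _ _)
              (mul_nonneg (Real.rpow_nonneg ht.le _) hbt.le))
        _ ≤ eLpNorm (fun τ : ℝ => τ ^ (-α - (1 / (⊤:ℝ≥0∞)).toReal) * b τ) ⊤
              (volume.restrict (Ioo t (2*t))) := by
            apply low_top _ _ _ measurableSet_Ioo _ hbd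
            rw [Real.volume_Ioo]
            exact (ENNReal.ofReal_pos.2 (by linarith)).ne'
        _ ≤ _ := eLpNorm_mono_measure _ (Measure.restrict_mono
              Ioo_subset_Ioi_self le_rfl)
    · -- upper bound on Ioi t
      have hbd : ∀ᵐ τ ∂(volume.restrict (Ioi t)),
          ‖τ ^ (-α - (1 / (⊤:ℝ≥0∞)).toReal) * b τ‖ ≤ (C₂/c₂) * (t ^ (-α) * b t) := by
        rw [ae_restrict_iff' measurableSet_Ioi]
        refine ae_of_all _ fun τ hτ' => ?_
        have hτ : 0 < τ := lt_trans ht hτ'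
        rw [hr0, sub_zero, Real.norm_eq_abs,
          abs_of_nonneg (mul_nonneg (Real.rpow_nonneg hτ.le _) (hbp τ hτ).le)]
        have split : τ ^ (-α) * b τ = τ ^ (-(α/2)) * (τ ^ (-(α/2)) * b τ) := by
          rw [← mul_assoc, tmul τ hτ (show -(α/2) + -(α/2) = -α by ring)]
        rw [split]
        calc τ ^ (-(α/2)) * (τ ^ (-(α/2)) * b τ)
            ≤ τ ^ (-(α/2)) * ((C₂/c₂) * (t ^ (-(α/2)) * b t)) :=
              mul_le_mul_of_nonneg_left (kUp' t τ ht (le_of_lt hτ')) (Real.rpow_nonneg hτ.le _)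
          _ ≤ t ^ (-(α/2)) * ((C₂/c₂) * (t ^ (-(α/2)) * b t)) :=
              mul_le_mul_of_nonneg_right
                (Real.rpow_le_rpow_of_nonpos ht (le_of_lt hτ') (by linarith))
                (mul_nonneg (by positivity) (mul_nonneg (Real.rpow_nonneg ht.le _) hbt.le))
          _ = (C₂/c₂) * (t ^ (-α) * b t) := by
              rw [← tmul t ht (show -(α/2) + -(α/2) = -α by ring)]; ring
      calc eLpNorm (fun τ : ℝ => τ ^ (-α - (1 / (⊤:ℝ≥0∞)).toReal) * b τ) ⊤
            (volume.restrict (Ioi t))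
          ≤ ENNReal.ofReal ((C₂/c₂) * (t ^ (-α) * b t)) := by
            rw [eLpNorm_exponent_top]; exact eLpNormEssSup_le_of_ae_bound hbd
        _ ≤ _ := ENNReal.ofReal_le_ofReal (mul_le_mul_of_nonneg_right (le_max_right _ _)
              (mul_nonneg (Real.rpow_nonneg ht.le _) hbt.le))
  · -- q finite
    have hq0 : q ≠ 0 := hq.ne'
    have hp : 0 < q.toReal := ENNReal.toReal_pos hq0 hqtop
    have hr : (1/q).toReal = 1/q.toReal := by rw [one_div, one_div, ENNReal.toReal_inv]
    have hv : 0 < α/2 * q.toReal := mul_pos (by positivity) hp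
    set cA : ℝ := (c₂/C₂) * min ((2:ℝ) ^ (-(α + α/2 - 1/q.toReal))) 1 * 2 ^ (-(1/q.toReal))
      with hcA
    set cB : ℝ := (c₁/C₁) * min ((2:ℝ) ^ (-α - α/2 - 1/q.toReal)) 1 with hcB
    set CA : ℝ := (C₁/c₁) * (α/2 * q.toReal) ^ (-(1/q.toReal)) with hCA'
    set CB : ℝ := (C₂/c₂) * (α/2 * q.toReal) ^ (-(1/q.toReal)) with hCB'
    have hcApos : 0 < cA := by
      refine mul_pos (mul_pos (by positivity) (lt_min (by positivity) one_pos)) (by positivity)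
    have hcBpos : 0 < cB := mul_pos (by positivity) (lt_min (by positivity) one_pos)
    have hCApos : 0 < CA := mul_pos (by positivity) (Real.rpow_pos_of_pos hv _)
    have hCBpos : 0 < CB := mul_pos (by positivity) (Real.rpow_pos_of_pos hv _)
    refine ⟨min cA cB, max CA CB, lt_min hcApos hcBpos, lt_max_of_lt_left hCApos,
      fun t ht => ?_⟩
    have hbt := hbp t ht
    refine ⟨⟨?_, ?_⟩, ?_, ?_⟩
    · -- lower bound on Ioo 0 t
      set M : ℝ := ((c₂/C₂) * min ((2:ℝ) ^ (-(α + α/2 - 1/q.toReal))) 1) *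
        (t ^ (-(α/2)) * b t * t ^ (α + α/2 - 1/q.toReal)) with hM
      have hMnn : 0 ≤ M := mul_nonneg (by positivity)
        (mul_nonneg (mul_nonneg (Real.rpow_nonneg ht.le _) hbt.le) (Real.rpow_nonneg ht.le _))
      have hbd : ∀ τ ∈ Ioo (t/2) t, M ≤ τ ^ (α - (1/q).toReal) * b τ := by
        intro τ hτ'
        have hτ : 0 < τ := lt_trans (by linarith) hτ'.1
        rw [hr]
        have split : τ ^ (α - 1/q.toReal) * b τ
            = τ ^ (α + α/2 - 1/q.toReal) * (τ ^ (-(α/2)) * b τ) := by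
          rw [← mul_assoc,
            tmul τ hτ (show (α + α/2 - 1/q.toReal) + -(α/2) = α - 1/q.toReal by ring)]
        rw [split]
        have p1 : min ((2:ℝ) ^ (-(α + α/2 - 1/q.toReal))) 1 * t ^ (α + α/2 - 1/q.toReal) ≤
            τ ^ (α + α/2 - 1/q.toReal) :=
          pow_lb1 t (α + α/2 - 1/q.toReal) τ ht hτ'.1.le hτ'.2.le
        have p2 := kLow t τ ht hτ hτ'.2.le
        calc M = (min ((2:ℝ) ^ (-(α + α/2 - 1/q.toReal))) 1 * t ^ (α + α/2 - 1/q.toReal)) *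
              ((c₂/C₂) * (t ^ (-(α/2)) * b t)) := by rw [hM]; ring
          _ ≤ (min ((2:ℝ) ^ (-(α + α/2 - 1/q.toReal))) 1 * t ^ (α + α/2 - 1/q.toReal)) *
              (τ ^ (-(α/2)) * b τ) := mul_le_mul_of_nonneg_left p2 (by positivity)
          _ ≤ τ ^ (α + α/2 - 1/q.toReal) * (τ ^ (-(α/2)) * b τ) :=
              mul_le_mul_of_nonneg_right p1
                (mul_nonneg (Real.rpow_nonneg hτ.le _) (hbp τ hτ).le)
      have e2 : (t ^ (-(α/2)) * t ^ (α + α/2 - 1/q.toReal)) * t ^ (1/q.toReal) = t ^ α := by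
        rw [tmul t ht (show -(α/2) + (α + α/2 - 1/q.toReal) = α - 1/q.toReal by ring),
          tmul t ht (show (α - 1/q.toReal) + 1/q.toReal = α by ring)]
      have e3 : (t/2) ^ (1/q.toReal) = t ^ (1/q.toReal) * 2 ^ (-(1/q.toReal)) := by
        rw [Real.div_rpow ht.le (by norm_num), Real.rpow_neg (by norm_num), div_eq_mul_inv]
      calc ENNReal.ofReal (min cA cB * (t ^ α * b t))
          ≤ ENNReal.ofReal (M * (t/2) ^ (1/q.toReal)) := by
            refine ENNReal.ofReal_le_ofReal ?_
            have : M * (t/2) ^ (1/q.toReal) = cA * (t ^ α * b t) := by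
              rw [hM, hcA, e3, ← e2]; ring
            rw [this]
            exact mul_le_mul_of_nonneg_right (min_le_left _ _)
              (mul_nonneg (Real.rpow_nonneg ht.le _) hbt.le)
        _ = ENNReal.ofReal M * (volume (Ioo (t/2) t)) ^ (1/q.toReal) := by
            rw [Real.volume_Ioo, show t - t/2 = t/2 by ring,
              ENNReal.ofReal_rpow_of_nonneg (by linarith) (by positivity),
              ← ENNReal.ofReal_mul hMnn]
        _ ≤ eLpNorm (fun τ : ℝ => τ ^ (α - (1/q).toReal) * b τ) q
              (volume.restrict (Ioo (t/2) t)) :=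
            low_fin q hq0 hqtop _ M hMnn _ measurableSet_Ioo hbd
        _ ≤ _ := eLpNorm_mono_measure _ (Measure.restrict_mono
              (Ioo_subset_Ioo_left (by linarith)) le_rfl)
    · -- upper bound on Ioo 0 t
      have hbd : ∀ τ ∈ Ioo 0 t, ‖τ ^ (α - (1/q).toReal) * b τ‖ ≤
          ‖((C₁/c₁) * (t ^ (α/2) * b t)) * τ ^ (α/2 - 1/q.toReal)‖ := by
        intro τ hτ'
        have hτ : 0 < τ := hτ'.1
        rw [hr, Real.norm_eq_abs, Real.norm_eq_abs,
          abs_of_nonneg (mul_nonneg (Real.rpow_nonneg hτ.le _) (hbp τ hτ).le),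
          abs_of_nonneg (mul_nonneg (mul_nonneg (by positivity)
            (mul_nonneg (Real.rpow_nonneg ht.le _) hbt.le)) (Real.rpow_nonneg hτ.le _))]
        have split : τ ^ (α - 1/q.toReal) * b τ
            = τ ^ (α/2 - 1/q.toReal) * (τ ^ (α/2) * b τ) := by
          rw [← mul_assoc,
            tmul τ hτ (show (α/2 - 1/q.toReal) + α/2 = α - 1/q.toReal by ring)]
        rw [split]
        calc τ ^ (α/2 - 1/q.toReal) * (τ ^ (α/2) * b τ)
            ≤ τ ^ (α/2 - 1/q.toReal) * ((C₁/c₁) * (t ^ (α/2) * b t)) :=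
              mul_le_mul_of_nonneg_left (kUp t τ ht hτ hτ'.2.le) (Real.rpow_nonneg hτ.le _)
          _ = ((C₁/c₁) * (t ^ (α/2) * b t)) * τ ^ (α/2 - 1/q.toReal) := mul_comm _ _
      calc eLpNorm (fun τ : ℝ => τ ^ (α - (1/q).toReal) * b τ) q (volume.restrict (Ioo 0 t))
          ≤ eLpNorm (fun τ : ℝ => ((C₁/c₁) * (t ^ (α/2) * b t)) * τ ^ (α/2 - 1/q.toReal)) q
              (volume.restrict (Ioo 0 t)) := elp_mono_on _ _ _ measurableSet_Ioo hbd q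
        _ = ENNReal.ofReal ((C₁/c₁) * (t ^ (α/2) * b t)) *
              eLpNorm (fun τ : ℝ => τ ^ (α/2 - 1/q.toReal)) q (volume.restrict (Ioo 0 t)) :=
            elp_const_mul _ (mul_nonneg (by positivity)
              (mul_nonneg (Real.rpow_nonneg ht.le _) hbt.le)) _ q _
        _ = ENNReal.ofReal ((C₁/c₁) * (t ^ (α/2) * b t)) *
              ENNReal.ofReal ((t ^ (α/2 * q.toReal) / (α/2 * q.toReal)) ^ (1/q.toReal)) := by
            rw [elp_pow_Ioo q hq0 hqtop (α/2) t (by positivity) ht]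
        _ ≤ ENNReal.ofReal (max CA CB * (t ^ α * b t)) := by
            rw [alg1 t (α/2) (α/2 * q.toReal) q.toReal ht hv hp,
              ← ENNReal.ofReal_mul (mul_nonneg (by positivity)
                (mul_nonneg (Real.rpow_nonneg ht.le _) hbt.le))]
            refine ENNReal.ofReal_le_ofReal ?_
            have : ((C₁/c₁) * (t ^ (α/2) * b t)) *
                ((α/2 * q.toReal) ^ (-(1/q.toReal)) * t ^ (α/2)) = CA * (t ^ α * b t) := by
              rw [hCA', ← tmul t ht (show α/2 + α/2 = α by ring)]; ring
            rw [this]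
            exact mul_le_mul_of_nonneg_right (le_max_left _ _)
              (mul_nonneg (Real.rpow_nonneg ht.le _) hbt.le)
    · -- lower bound on Ioi t
      set M' : ℝ := ((c₁/C₁) * min ((2:ℝ) ^ (-α - α/2 - 1/q.toReal)) 1) *
        (t ^ (α/2) * b t * t ^ (-α - α/2 - 1/q.toReal)) with hM'
      have hMnn : 0 ≤ M' := mul_nonneg (by positivity)
        (mul_nonneg (mul_nonneg (Real.rpow_nonneg ht.le _) hbt.le) (Real.rpow_nonneg ht.le _))
      have hbd : ∀ τ ∈ Ioo t (2*t), M' ≤ τ ^ (-α - (1/q).toReal) * b τ := by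
        intro τ hτ'
        have hτ : 0 < τ := lt_trans ht hτ'.1
        rw [hr]
        have split : τ ^ (-α - 1/q.toReal) * b τ
            = τ ^ (-α - α/2 - 1/q.toReal) * (τ ^ (α/2) * b τ) := by
          rw [← mul_assoc,
            tmul τ hτ (show (-α - α/2 - 1/q.toReal) + α/2 = -α - 1/q.toReal by ring)]
        rw [split]
        have p1 : min ((2:ℝ) ^ (-α - α/2 - 1/q.toReal)) 1 * t ^ (-α - α/2 - 1/q.toReal) ≤
            τ ^ (-α - α/2 - 1/q.toReal) :=
          pow_lb2 t (-α - α/2 - 1/q.toReal) τ ht hτ'.1.le hτ'.2.le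
        have p2 := kLow' t τ ht hτ'.1.le
        calc M' = (min ((2:ℝ) ^ (-α - α/2 - 1/q.toReal)) 1 * t ^ (-α - α/2 - 1/q.toReal)) *
              ((c₁/C₁) * (t ^ (α/2) * b t)) := by rw [hM']; ring
          _ ≤ (min ((2:ℝ) ^ (-α - α/2 - 1/q.toReal)) 1 * t ^ (-α - α/2 - 1/q.toReal)) *
              (τ ^ (α/2) * b τ) := mul_le_mul_of_nonneg_left p2 (by positivity)
          _ ≤ τ ^ (-α - α/2 - 1/q.toReal) * (τ ^ (α/2) * b τ) :=
              mul_le_mul_of_nonneg_right p1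
                (mul_nonneg (Real.rpow_nonneg hτ.le _) (hbp τ hτ).le)
      have e2 : (t ^ (α/2) * t ^ (-α - α/2 - 1/q.toReal)) * t ^ (1/q.toReal) = t ^ (-α) := by
        rw [tmul t ht (show α/2 + (-α - α/2 - 1/q.toReal) = -α - 1/q.toReal by ring),
          tmul t ht (show (-α - 1/q.toReal) + 1/q.toReal = -α by ring)]
      calc ENNReal.ofReal (min cA cB * (t ^ (-α) * b t))
          ≤ ENNReal.ofReal (M' * t ^ (1/q.toReal)) := by
            refine ENNReal.ofReal_le_ofReal ?_
            have : M' * t ^ (1/q.toReal) = cB * (t ^ (-α) * b t) := by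
              rw [hM', hcB, ← e2]; ring
            rw [this]
            exact mul_le_mul_of_nonneg_right (min_le_right _ _)
              (mul_nonneg (Real.rpow_nonneg ht.le _) hbt.le)
        _ = ENNReal.ofReal M' * (volume (Ioo t (2*t))) ^ (1/q.toReal) := by
            rw [Real.volume_Ioo, show 2*t - t = t by ring,
              ENNReal.ofReal_rpow_of_nonneg ht.le (by positivity),
              ← ENNReal.ofReal_mul hMnn]
        _ ≤ eLpNorm (fun τ : ℝ => τ ^ (-α - (1/q).toReal) * b τ) q
              (volume.restrict (Ioo t (2*t))) :=
            low_fin q hq0 hqtop _ M' hMnn _ measurableSet_Ioo hbd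
        _ ≤ _ := eLpNorm_mono_measure _ (Measure.restrict_mono
              Ioo_subset_Ioi_self le_rfl)
    · -- upper bound on Ioi t
      have hbd : ∀ τ ∈ Ioi t, ‖τ ^ (-α - (1/q).toReal) * b τ‖ ≤
          ‖((C₂/c₂) * (t ^ (-(α/2)) * b t)) * τ ^ (-(α/2) - 1/q.toReal)‖ := by
        intro τ hτ'
        have hτ : 0 < τ := lt_trans ht hτ'
        rw [hr, Real.norm_eq_abs, Real.norm_eq_abs,
          abs_of_nonneg (mul_nonneg (Real.rpow_nonneg hτ.le _) (hbp τ hτ).le),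
          abs_of_nonneg (mul_nonneg (mul_nonneg (by positivity)
            (mul_nonneg (Real.rpow_nonneg ht.le _) hbt.le)) (Real.rpow_nonneg hτ.le _))]
        have split : τ ^ (-α - 1/q.toReal) * b τ
            = τ ^ (-(α/2) - 1/q.toReal) * (τ ^ (-(α/2)) * b τ) := by
          rw [← mul_assoc,
            tmul τ hτ (show (-(α/2) - 1/q.toReal) + -(α/2) = -α - 1/q.toReal by ring)]
        rw [split]
        calc τ ^ (-(α/2) - 1/q.toReal) * (τ ^ (-(α/2)) * b τ)
            ≤ τ ^ (-(α/2) - 1/q.toReal) * ((C₂/c₂) * (t ^ (-(α/2)) * b t)) :=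
              mul_le_mul_of_nonneg_left (kUp' t τ ht (le_of_lt hτ'))
                (Real.rpow_nonneg hτ.le _)
          _ = ((C₂/c₂) * (t ^ (-(α/2)) * b t)) * τ ^ (-(α/2) - 1/q.toReal) := mul_comm _ _
      calc eLpNorm (fun τ : ℝ => τ ^ (-α - (1/q).toReal) * b τ) q (volume.restrict (Ioi t))
          ≤ eLpNorm (fun τ : ℝ => ((C₂/c₂) * (t ^ (-(α/2)) * b t)) *
              τ ^ (-(α/2) - 1/q.toReal)) q (volume.restrict (Ioi t)) :=
            elp_mono_on _ _ _ measurableSet_Ioi hbd q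
        _ = ENNReal.ofReal ((C₂/c₂) * (t ^ (-(α/2)) * b t)) *
              eLpNorm (fun τ : ℝ => τ ^ (-(α/2) - 1/q.toReal)) q (volume.restrict (Ioi t)) :=
            elp_const_mul _ (mul_nonneg (by positivity)
              (mul_nonneg (Real.rpow_nonneg ht.le _) hbt.le)) _ q _
        _ = ENNReal.ofReal ((C₂/c₂) * (t ^ (-(α/2)) * b t)) *
              ENNReal.ofReal ((t ^ (-(α/2 * q.toReal)) / (α/2 * q.toReal)) ^ (1/q.toReal)) := by
            rw [elp_pow_Ioi q hq0 hqtop (α/2) t (by positivity) ht]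
        _ ≤ ENNReal.ofReal (max CA CB * (t ^ (-α) * b t)) := by
            rw [show -(α/2 * q.toReal) = (-(α/2)) * q.toReal by ring,
              alg1 t (-(α/2)) (α/2 * q.toReal) q.toReal ht hv hp,
              ← ENNReal.ofReal_mul (mul_nonneg (by positivity)
                (mul_nonneg (Real.rpow_nonneg ht.le _) hbt.le))]
            refine ENNReal.ofReal_le_ofReal ?_
            have : ((C₂/c₂) * (t ^ (-(α/2)) * b t)) *
                ((α/2 * q.toReal) ^ (-(1/q.toReal)) * t ^ (-(α/2))) = CB * (t ^ (-α) * b t) := by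
              rw [hCB', ← tmul t ht (show -(α/2) + -(α/2) = -α by ring)]; ring
            rw [this]
            exact mul_le_mul_of_nonneg_right (le_max_right _ _)
              (mul_nonneg (Real.rpow_nonneg ht.le _) hbt.le)
end

section
/- Let f be a measurable function on ℝⁿ with f ∈ L₁ + L_∞, let f*(t) denote its non-increasing rearrangement and f**(t) := (1/t)∫₀^t f*(s) ds. Then the function t ↦ t(f**(t) - f*(t)) is non-decreasing on (0,∞). -/
open Set MeasureTheory
open scoped ENNReal NNReal

/-- The non-increasing rearrangement of `f` with respect to the measure `μ`:
`f*(t) = inf { s ≥ 0 : μ{ |f| > s } ≤ t }`. -/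
noncomputable def rearr {α : Type*} [MeasurableSpace α] (μ : Measure α)
    (f : α → ℝ) (t : ℝ) : ℝ :=
  sInf {s : ℝ | 0 ≤ s ∧ μ {x | s < |f x|} ≤ ENNReal.ofReal t}

section Aux

variable {α : Type*} [MeasurableSpace α] {μ : Measure α} {f : α → ℝ}

lemma rearr_nonneg (t : ℝ) : 0 ≤ rearr μ f t :=
  Real.sInf_nonneg (fun _ hs => hs.1)

lemma rearr_bddBelow (t : ℝ) :
    BddBelow {s : ℝ | 0 ≤ s ∧ μ {x | s < |f x|} ≤ ENNReal.ofReal t} :=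
  ⟨0, fun _ hs => hs.1⟩

lemma rearr_le_iff {t s : ℝ}
    (hne : {s : ℝ | 0 ≤ s ∧ μ {x | s < |f x|} ≤ ENNReal.ofReal t}.Nonempty)
    (hs : 0 ≤ s) :
    rearr μ f t ≤ s ↔ μ {x | s < |f x|} ≤ ENNReal.ofReal t := by
  constructor
  · intro hle
    have key : ∀ n : ℕ, μ {x | s + 1 / (n + 1) < |f x|} ≤ ENNReal.ofReal t := by
      intro n
      have hpos : (0 : ℝ) < 1 / (n + 1) := by positivity
      have hlt : rearr μ f t < s + 1 / (n + 1) := lt_of_le_of_lt hle (by linarith)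
      obtain ⟨s', hs'S, hs'lt⟩ := (csInf_lt_iff (rearr_bddBelow t) hne).mp hlt
      exact le_trans (measure_mono fun x hx => lt_of_le_of_lt hs'lt.le hx) hs'S.2
    have hU : {x | s < |f x|} = ⋃ n : ℕ, {x | s + 1 / (n + 1) < |f x|} := by
      ext x
      simp only [mem_iUnion, mem_setOf_eq]
      constructor
      · intro hx
        obtain ⟨n, hn⟩ := exists_nat_one_div_lt (sub_pos.mpr hx)
        exact ⟨n, by push_cast at hn ⊢; linarith⟩
      · rintro ⟨n, hn⟩
        have hpos : (0 : ℝ) < 1 / ((n : ℝ) + 1) := by positivity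
        linarith
    have hdir : Directed (· ⊆ ·) (fun n : ℕ => {x | s + 1 / (n + 1) < |f x|}) := by
      apply (Monotone.directed_le)
      intro m n hmn x hx
      simp only [mem_setOf_eq] at hx ⊢
      have : (1 : ℝ) / (n + 1) ≤ 1 / (m + 1) := by
        apply one_div_le_one_div_of_le (by positivity)
        exact_mod_cast by omega
      linarith
    rw [hU, hdir.measure_iUnion]
    exact iSup_le key
  · intro hD
    exact csInf_le (rearr_bddBelow t) ⟨hs, hD⟩

lemma rearr_antitoneOn
    (hne : ∀ t : ℝ, 0 < t →
      {s : ℝ | 0 ≤ s ∧ μ {x | s < |f x|} ≤ ENNReal.ofReal t}.Nonempty) :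
    AntitoneOn (rearr μ f) (Ioi (0 : ℝ)) := by
  intro a ha b _ hab
  apply csInf_le_csInf (rearr_bddBelow _) (hne a ha)
  intro s hs
  exact ⟨hs.1, le_trans hs.2 (ENNReal.ofReal_le_ofReal hab)⟩

lemma distr_rearr_le {t : ℝ}
    (hne : {s : ℝ | 0 ≤ s ∧ μ {x | s < |f x|} ≤ ENNReal.ofReal t}.Nonempty) :
    μ {x | rearr μ f t < |f x|} ≤ ENNReal.ofReal t :=
  (rearr_le_iff hne (rearr_nonneg t)).mp le_rfl

end Aux

section L1Linf

variable {α : Type*} [MeasurableSpace α] {μ : Measure α} {f g h : α → ℝ}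

/-- a.e. bound `|f| ≤ |g| + M` where `M` is the essential sup of `h`. -/
lemma ae_abs_le (hfgh : f = g + h) (hh : MemLp h ⊤ μ) :
    ∀ᵐ x ∂μ, |f x| ≤ |g x| + (eLpNormEssSup h μ).toReal := by
  have hM : eLpNormEssSup h μ ≠ ⊤ := by
    have := hh.2
    rwa [eLpNorm_exponent_top, lt_top_iff_ne_top] at this
  filter_upwards [ae_le_eLpNormEssSup (f := h) (μ := μ)] with x hx
  have hx' : |h x| ≤ (eLpNormEssSup h μ).toReal := by
    have : ((‖h x‖₊ : ℝ≥0∞)).toReal ≤ (eLpNormEssSup h μ).toReal :=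
      ENNReal.toReal_mono hM (by exact_mod_cast hx)
    simpa [Real.norm_eq_abs] using this
  have : f x = g x + h x := by rw [hfgh]; rfl
  calc |f x| = |g x + h x| := by rw [this]
    _ ≤ |g x| + |h x| := abs_add_le _ _
    _ ≤ |g x| + (eLpNormEssSup h μ).toReal := by linarith

lemma distr_le_distr_g (hfgh : f = g + h) (hh : MemLp h ⊤ μ) (s : ℝ) :
    μ {x | s < |f x|} ≤ μ {x | s - (eLpNormEssSup h μ).toReal < |g x|} := by
  apply measure_mono_ae
  filter_upwards [ae_abs_le hfgh hh] with x hx hxs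
  have hxs' : s < |f x| := hxs
  show s - (eLpNormEssSup h μ).toReal < |g x|
  linarith

/-- Chebyshev: `μ{|g| > u} ≤ (∫⁻ ‖g‖) / u`. -/
lemma chebyshev_abs (hg : AEMeasurable g μ) {u : ℝ} (hu : 0 < u) :
    μ {x | u < |g x|} ≤ (∫⁻ x, (‖g x‖₊ : ℝ≥0∞) ∂μ) / ENNReal.ofReal u := by
  have hsub : {x | u < |g x|} ⊆ {x | ENNReal.ofReal u ≤ (‖g x‖₊ : ℝ≥0∞)} := by
    intro x hx
    simp only [mem_setOf_eq] at hx ⊢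
    rw [← enorm_eq_nnnorm, ← ofReal_norm, Real.norm_eq_abs]
    exact ENNReal.ofReal_le_ofReal hx.le
  have hmble : AEMeasurable (fun x => (‖g x‖₊ : ℝ≥0∞)) μ := hg.enorm
  have := mul_meas_ge_le_lintegral₀ hmble (ENNReal.ofReal u)
  calc μ {x | u < |g x|} ≤ μ {x | ENNReal.ofReal u ≤ (‖g x‖₊ : ℝ≥0∞)} :=
        measure_mono hsub
    _ ≤ (∫⁻ x, (‖g x‖₊ : ℝ≥0∞) ∂μ) / ENNReal.ofReal u := by
        rw [ENNReal.le_div_iff_mul_le (Or.inl (by simp [hu])) (Or.inl ENNReal.ofReal_ne_top)]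
        rw [mul_comm]; exact this

lemma rearr_set_nonempty (hfgh : f = g + h) (hg : MemLp g 1 μ) (hh : MemLp h ⊤ μ)
    {t : ℝ} (ht : 0 < t) :
    {s : ℝ | 0 ≤ s ∧ μ {x | s < |f x|} ≤ ENNReal.ofReal t}.Nonempty := by
  set M := (eLpNormEssSup h μ).toReal with hMdef
  have hM0 : 0 ≤ M := ENNReal.toReal_nonneg
  set L := ∫⁻ x, (‖g x‖₊ : ℝ≥0∞) ∂μ with hLdef
  have hgi : Integrable g μ := memLp_one_iff_integrable.mp hg
  have hL : L ≠ ⊤ := hgi.2.ne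
  set c : ℝ := max 1 (L.toReal / t) with hcdef
  have hc1 : (1 : ℝ) ≤ c := le_max_left _ _
  have hc0 : 0 < c := lt_of_lt_of_le one_pos hc1
  refine ⟨M + c, by linarith, ?_⟩
  calc μ {x | M + c < |f x|} ≤ μ {x | (M + c) - M < |g x|} :=
        distr_le_distr_g hfgh hh _
    _ = μ {x | c < |g x|} := by norm_num
    _ ≤ L / ENNReal.ofReal c := chebyshev_abs hgi.aemeasurable hc0
    _ ≤ ENNReal.ofReal t := by
        rw [ENNReal.div_le_iff_le_mul (Or.inl (by simp [hc0])) (Or.inl ENNReal.ofReal_ne_top)]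
        rw [← ENNReal.ofReal_mul ht.le]
        calc L = ENNReal.ofReal L.toReal := (ENNReal.ofReal_toReal hL).symm
          _ ≤ ENNReal.ofReal (t * c) := by
              apply ENNReal.ofReal_le_ofReal
              calc L.toReal = t * (L.toReal / t) := by field_simp
                _ ≤ t * c := by
                    apply mul_le_mul_of_nonneg_left (le_max_right _ _) ht.le

/-- Layer cake: the integral of the distribution function of `|g|` is the `L¹` norm. -/
lemma lintegral_distr_g (hg : AEMeasurable g μ) :
    ∫⁻ u in Ioi (0:ℝ), μ {x | u < |g x|} = ∫⁻ x, (‖g x‖₊ : ℝ≥0∞) ∂μ := by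
  have := lintegral_eq_lintegral_meas_lt μ (f := fun x => |g x|)
    (Filter.Eventually.of_forall fun x => abs_nonneg _) (continuous_abs.measurable.comp_aemeasurable hg)
  rw [← this]
  apply lintegral_congr
  intro x
  rw [← enorm_eq_nnnorm, ← ofReal_norm, Real.norm_eq_abs]

/-- Integrability of the rearrangement on `(0, T)`. -/
lemma integrableOn_rearr (hfgh : f = g + h) (hg : MemLp g 1 μ) (hh : MemLp h ⊤ μ)
    {T : ℝ} (hT : 0 < T) :
    IntegrableOn (rearr μ f) (Ioo (0:ℝ) T) volume := by
  set M := (eLpNormEssSup h μ).toReal with hMdef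
  have hM0 : 0 ≤ M := ENNReal.toReal_nonneg
  set L := ∫⁻ x, (‖g x‖₊ : ℝ≥0∞) ∂μ with hLdef
  have hgi : Integrable g μ := memLp_one_iff_integrable.mp hg
  have hL : L ≠ ⊤ := hgi.2.ne
  have hne := fun t ht => rearr_set_nonempty hfgh hg hh (t := t) ht
  -- measurability
  have hanti : AntitoneOn (rearr μ f) (Ioo (0:ℝ) T) :=
    (rearr_antitoneOn hne).mono (fun x hx => hx.1)
  have hmble : AEMeasurable (rearr μ f) (volume.restrict (Ioo (0:ℝ) T)) :=
    aemeasurable_restrict_of_antitoneOn measurableSet_Ioo hanti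
  refine ⟨hmble.aestronglyMeasurable, ?_⟩
  -- finiteness of the integral
  rw [hasFiniteIntegral_iff_norm]
  have hnorm : ∀ t, ENNReal.ofReal ‖rearr μ f t‖ = ENNReal.ofReal (rearr μ f t) := by
    intro t; rw [Real.norm_eq_abs, abs_of_nonneg (rearr_nonneg t)]
  simp_rw [hnorm]
  rw [lintegral_eq_lintegral_meas_lt _ (Filter.Eventually.of_forall fun t => rearr_nonneg t)
    hmble]
  -- pointwise bound on the layer measures
  have hDg : ∀ s : ℝ, μ {x | s < |f x|} ≤ μ {x | s - M < |g x|} :=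
    distr_le_distr_g hfgh hh
  have hbound : ∀ s ∈ Ioi (0:ℝ),
      (volume.restrict (Ioo (0:ℝ) T)) {t | s < rearr μ f t} ≤
        (Ioc (0:ℝ) M).indicator (fun _ => ENNReal.ofReal T) s +
        (Ioi M).indicator (fun s => μ {x | s - M < |g x|}) s := by
    intro s hs
    have hs0 : (0:ℝ) < s := hs
    by_cases hsM : s ≤ M
    · -- bound by T
      rw [indicator_of_mem (mem_Ioc.mpr ⟨hs0, hsM⟩), indicator_of_notMem (by simpa using hsM)]
      calc (volume.restrict (Ioo (0:ℝ) T)) {t | s < rearr μ f t}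
          ≤ (volume.restrict (Ioo (0:ℝ) T)) univ := measure_mono (subset_univ _)
        _ = volume (Ioo (0:ℝ) T) := by rw [Measure.restrict_apply_univ]
        _ = ENNReal.ofReal T := by rw [Real.volume_Ioo]; norm_num
        _ ≤ _ := le_self_add
    · push_neg at hsM
      rw [indicator_of_notMem (fun hmem => absurd hmem.2 (not_le.mpr hsM)),
        indicator_of_mem (mem_Ioi.mpr hsM), zero_add]
      set Dg := μ {x | s - M < |g x|} with hDgdef
      have hDs : μ {x | s < |f x|} ≤ Dg := hDg s
      have hDgfin : Dg ≠ ⊤ := by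
        have : Dg ≤ L / ENNReal.ofReal (s - M) :=
          chebyshev_abs hgi.aemeasurable (by linarith)
        refine ne_top_of_le_ne_top ?_ this
        exact (ENNReal.div_lt_top hL (by simp; linarith)).ne
      -- the set {t ∈ (0,T) | s < f*(t)} is contained in (0, Dg.toReal)
      rw [Measure.restrict_apply' measurableSet_Ioo]
      calc volume ({t | s < rearr μ f t} ∩ Ioo 0 T)
          ≤ volume (Ioo (0:ℝ) Dg.toReal) := by
            apply measure_mono
            rintro t ⟨ht1, ht2⟩
            simp only [mem_setOf_eq] at ht1
            have ht0 : (0:ℝ) < t := ht2.1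
            have hnotle : ¬ rearr μ f t ≤ s := not_le.mpr ht1
            rw [rearr_le_iff (hne t ht0) hs0.le] at hnotle
            push_neg at hnotle
            have hlt : ENNReal.ofReal t < Dg := lt_of_lt_of_le hnotle hDs
            constructor
            · exact ht0
            · have := ENNReal.toReal_strict_mono hDgfin hlt
              rwa [ENNReal.toReal_ofReal ht0.le] at this
        _ = ENNReal.ofReal Dg.toReal := by rw [Real.volume_Ioo]; norm_num
        _ = Dg := ENNReal.ofReal_toReal hDgfin
  calc ∫⁻ s in Ioi (0:ℝ), (volume.restrict (Ioo (0:ℝ) T)) {t | s < rearr μ f t}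
      ≤ ∫⁻ s in Ioi (0:ℝ),
          ((Ioc (0:ℝ) M).indicator (fun _ => ENNReal.ofReal T) s +
            (Ioi M).indicator (fun s => μ {x | s - M < |g x|}) s) :=
        setLIntegral_mono' measurableSet_Ioi hbound
    _ ≤ ∫⁻ s, ((Ioc (0:ℝ) M).indicator (fun _ => ENNReal.ofReal T) s +
            (Ioi M).indicator (fun s => μ {x | s - M < |g x|}) s) :=
        setLIntegral_le_lintegral _ _
    _ < ⊤ := by
        rw [lintegral_add_left]
        · apply ENNReal.add_lt_top.mpr
          constructor
          · rw [lintegral_indicator measurableSet_Ioc (fun _ => ENNReal.ofReal T), setLIntegral_const]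
            exact ENNReal.mul_lt_top ENNReal.ofReal_lt_top (measure_Ioc_lt_top)
          · rw [lintegral_indicator measurableSet_Ioi (fun s => μ {x | s - M < |g x|})]
            -- translate
            have htrans : ∫⁻ s in Ioi M, μ {x | s - M < |g x|} =
                ∫⁻ u in Ioi (0:ℝ), μ {x | u < |g x|} := by
              have hemb : MeasurableEmbedding (fun u : ℝ => u + M) :=
                (Homeomorph.addRight M).measurableEmbedding
              have hmp : MeasurePreserving (fun u : ℝ => u + M) volume volume :=
                measurePreserving_add_right volume M
              have hpre : (fun u : ℝ => u + M) ⁻¹' (Ioi M) = Ioi 0 := by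
                ext u; simp [lt_add_iff_pos_left]
              have := hmp.setLIntegral_comp_preimage_emb hemb
                (fun s => μ {x | s - M < |g x|}) (Ioi M)
              rw [hpre] at this
              rw [← this]
              apply lintegral_congr
              intro u
              congr 1
              ext x
              simp
            rw [htrans, lintegral_distr_g hgi.aemeasurable]
            exact hgi.2
        · exact measurable_const.indicator measurableSet_Ioc

end L1Linf

/-- For a measurable `f ∈ L₁ + L_∞` on `ℝⁿ`, with `f*` its
non-increasing rearrangement and `f**(t) = (1/t)∫₀^t f*(s) ds`, the function
`t ↦ t(f**(t) - f*(t))` is non-decreasing on `(0,∞)`. -/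
theorem t_mul_fss_sub_fs_monotone (n : ℕ) (f : (Fin n → ℝ) → ℝ)
    (hmeas : Measurable f)
    (hf : ∃ g h : (Fin n → ℝ) → ℝ, f = g + h ∧
      MemLp g 1 volume ∧ MemLp h ⊤ volume) :
    MonotoneOn
      (fun t => t * ((1 / t) * (∫ s in Ioo (0 : ℝ) t, rearr volume f s)
        - rearr volume f t))
      (Ioi 0) := by
  obtain ⟨g, h, hfgh, hg, hh⟩ := hf
  set μ : Measure (Fin n → ℝ) := volume
  have hne := fun t ht => rearr_set_nonempty (μ := μ) hfgh hg hh (t := t) ht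
  have hanti : AntitoneOn (rearr μ f) (Ioi (0:ℝ)) := rearr_antitoneOn hne
  intro a ha b hb hab
  simp only [mem_Ioi] at ha hb
  have ha0 : a ≠ 0 := ne_of_gt ha
  have hb0 : b ≠ 0 := ne_of_gt hb
  simp only
  rw [mul_sub, mul_sub, ← mul_assoc, ← mul_assoc,
    mul_one_div_cancel ha0, mul_one_div_cancel hb0, one_mul, one_mul]
  -- goal : Ia - a * f*(a) ≤ Ib - b * f*(b)
  have hint : ∀ T : ℝ, 0 < T → IntegrableOn (rearr μ f) (Ioo (0:ℝ) T) volume :=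
    fun T hT => integrableOn_rearr hfgh hg hh hT
  -- switch to Ioc
  have hIoc : ∀ T : ℝ, (∫ s in Ioo (0 : ℝ) T, rearr μ f s)
      = ∫ s in Ioc (0 : ℝ) T, rearr μ f s := by
    intro T
    apply setIntegral_congr_set
    exact Ioo_ae_eq_Ioc
  rw [hIoc a, hIoc b]
  have hintIoc : ∀ T : ℝ, 0 < T → IntegrableOn (rearr μ f) (Ioc (0:ℝ) T) volume := by
    intro T hT
    have := (hint (T+1) (by linarith)).mono_set (fun x (hx : x ∈ Ioc (0:ℝ) T) => ⟨hx.1, lt_of_le_of_lt hx.2 (by linarith)⟩)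
    exact this
  have hsplit : (∫ s in Ioc (0 : ℝ) b, rearr μ f s)
      = (∫ s in Ioc (0 : ℝ) a, rearr μ f s) + ∫ s in Ioc a b, rearr μ f s := by
    rw [← setIntegral_union]
    · rw [Ioc_union_Ioc_eq_Ioc ha.le hab]
    · exact Ioc_disjoint_Ioc_of_le le_rfl
    · exact measurableSet_Ioc
    · exact hintIoc a ha
    · exact ((hintIoc b hb).mono_set (Ioc_subset_Ioc ha.le le_rfl))
  rw [hsplit]
  -- key: ∫_{(a,b]} f* ≥ (b-a) f*(b)
  have hkey : (b - a) * rearr μ f b ≤ ∫ s in Ioc a b, rearr μ f s := by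
    have hconst : (∫ _ in Ioc a b, rearr μ f b) = (b - a) * rearr μ f b := by
      rw [setIntegral_const, Real.volume_real_Ioc, smul_eq_mul,
        max_eq_left (by linarith)]
    rw [← hconst]
    apply setIntegral_mono_on
    · exact integrableOn_const (by rw [Real.volume_Ioc]; exact ENNReal.ofReal_ne_top)
    · exact ((hintIoc b hb).mono_set (Ioc_subset_Ioc ha.le le_rfl))
    · exact measurableSet_Ioc
    · intro s hs
      exact hanti (lt_trans ha hs.1) hb hs.2
  have hfab : rearr μ f b ≤ rearr μ f a := hanti ha hb hab
  have hmul : a * rearr μ f b ≤ a * rearr μ f a :=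
    mul_le_mul_of_nonneg_left hfab ha.le
  linarith
end

section
/- Let 0 < η < 1 and define the operator Q_η on non-negative measurable functions on (0,∞) by (Q_η f)(t) := t^{-η} ∫_t^∞ s^{η} f(s) ds/s. Then for every non-negative measurable f on (0,∞) and every t > 0: ∫₀^t (Q_η f)(x) dx = (1/(1−η)) ∫₀^∞ min(1, t/u)^{1−η} f(u) du ≤ ∫₀^t (Q_η f*)(x) dx, where f* is the non-increasing rearrangement of f. -/
open Set MeasureTheory ENNReal

open Set MeasureTheory ENNReal

/-- Pointwise layercake: `c = vol {λ ∈ (0,∞) | ofReal λ < c}`. -/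
lemma pointwise_layer (c : ℝ≥0∞) :
    ∫⁻ l in Ioi (0:ℝ), ({l : ℝ | ENNReal.ofReal l < c}).indicator (fun _ => (1:ℝ≥0∞)) l = c := by
  rw [lintegral_indicator]
  · rw [setLIntegral_one]
    rcases eq_or_ne c ∞ with hc | hc
    · have : {l : ℝ | ENNReal.ofReal l < c} ∩ Ioi 0 = Ioi 0 := by
        ext x; simp [hc, ENNReal.ofReal_lt_top]
      rw [Measure.restrict_apply' measurableSet_Ioi, this, Real.volume_Ioi, hc]
    · have : {l : ℝ | ENNReal.ofReal l < c} ∩ Ioi 0 = Ioo 0 c.toReal := by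
        ext x
        simp only [mem_inter_iff, mem_setOf_eq, mem_Ioi, mem_Ioo]
        constructor
        · rintro ⟨h1, h2⟩
          exact ⟨h2, (ENNReal.ofReal_lt_iff_lt_toReal h2.le hc).mp h1⟩
        · rintro ⟨h1, h2⟩
          exact ⟨(ENNReal.ofReal_lt_iff_lt_toReal h1.le hc).mpr h2, h1⟩
      rw [Measure.restrict_apply' measurableSet_Ioi, this, Real.volume_Ioo,
        sub_zero, ENNReal.ofReal_toReal hc]
  · exact measurableSet_lt (ENNReal.measurable_ofReal) measurable_const

/-- Layer cake formula for `ℝ≥0∞`-valued functions. -/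
lemma layercakeE {μ : Measure ℝ} [SigmaFinite μ] (f : ℝ → ℝ≥0∞) (hf : Measurable f) :
    ∫⁻ x, f x ∂μ = ∫⁻ l in Ioi (0:ℝ), μ {x | ENNReal.ofReal l < f x} := by
  have key : ∀ x, f x = ∫⁻ l in Ioi (0:ℝ),
      ({p : ℝ × ℝ | ENNReal.ofReal p.1 < f p.2}).indicator (fun _ => (1:ℝ≥0∞)) (l, x) := by
    intro x
    rw [← pointwise_layer (f x)]
    rfl
  calc ∫⁻ x, f x ∂μ
      = ∫⁻ x, (∫⁻ l in Ioi (0:ℝ),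
          ({p : ℝ × ℝ | ENNReal.ofReal p.1 < f p.2}).indicator (fun _ => (1:ℝ≥0∞)) (l, x)) ∂μ := by
        exact lintegral_congr fun x => key x
    _ = ∫⁻ l in Ioi (0:ℝ), (∫⁻ x,
          ({p : ℝ × ℝ | ENNReal.ofReal p.1 < f p.2}).indicator (fun _ => (1:ℝ≥0∞)) (l, x) ∂μ) := by
        apply lintegral_lintegral_swap (μ := μ) (ν := volume.restrict (Ioi 0))
          (f := fun x l => ({p : ℝ × ℝ | ENNReal.ofReal p.1 < f p.2}).indicator
            (fun _ => (1:ℝ≥0∞)) (l, x))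
        apply Measurable.aemeasurable
        apply (measurable_const.indicator _).comp (measurable_swap)
        exact measurableSet_lt (ENNReal.measurable_ofReal.comp measurable_fst)
          (hf.comp measurable_snd)
    _ = ∫⁻ l in Ioi (0:ℝ), μ {x | ENNReal.ofReal l < f x} := by
        apply lintegral_congr
        intro l
        have : (fun x => ({p : ℝ × ℝ | ENNReal.ofReal p.1 < f p.2}).indicator
            (fun _ => (1:ℝ≥0∞)) (l, x)) = ({x : ℝ | ENNReal.ofReal l < f x}).indicator
            (fun _ => (1:ℝ≥0∞)) := by
          ext x; simp [Set.indicator_apply]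
        rw [this, lintegral_indicator (measurableSet_lt measurable_const hf), setLIntegral_one]


/-- The non-increasing rearrangement (with respect to Lebesgue measure on
`(0,∞)`) of a non-negative (extended-real valued) measurable function `f`. -/
noncomputable def rearrE (f : ℝ → ℝ≥0∞) (t : ℝ) : ℝ≥0∞ :=
  sInf {s : ℝ≥0∞ | volume {x ∈ Ioi (0 : ℝ) | s < f x} ≤ ENNReal.ofReal t}


lemma rearrE_antitone (f : ℝ → ℝ≥0∞) : Antitone (rearrE f) := by
  intro a b hab
  apply sInf_le_sInf
  intro s hs
  exact hs.trans (ENNReal.ofReal_le_ofReal hab)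

lemma rearrE_measurable (f : ℝ → ℝ≥0∞) : Measurable (rearrE f) :=
  (rearrE_antitone f).measurable

/-- Key pointwise lemma: if `ofReal x < vol {y > 0 | ofReal l < f y}` then
`ofReal l < (rearrE f) x`. -/
lemma lt_rearrE {f : ℝ → ℝ≥0∞} {l x : ℝ} (hl : 0 ≤ l)
    (h : ENNReal.ofReal x < volume {y ∈ Ioi (0:ℝ) | ENNReal.ofReal l < f y}) :
    ENNReal.ofReal l < rearrE f x := by
  by_contra hc
  push_neg at hc
  have claim1 : ∀ m : ℝ≥0∞, rearrE f x < m →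
      volume {y ∈ Ioi (0:ℝ) | m < f y} ≤ ENNReal.ofReal x := by
    intro m hm
    obtain ⟨s, hs, hsm⟩ := sInf_lt_iff.mp hm
    refine le_trans (measure_mono ?_) hs
    intro y hy
    exact ⟨hy.1, lt_trans hsm hy.2⟩
  -- right continuity of the distribution function
  set T : ℕ → Set ℝ := fun n => {y ∈ Ioi (0:ℝ) | ENNReal.ofReal (l + 1/(n+1)) < f y} with hT
  have hTmono : Monotone T := by
    intro n m hnm y hy
    refine ⟨hy.1, lt_of_le_of_lt ?_ hy.2⟩
    apply ENNReal.ofReal_le_ofReal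
    have : (1:ℝ)/(m+1) ≤ 1/(n+1) := by
      apply one_div_le_one_div_of_le (by positivity)
      exact_mod_cast by exact_mod_cast Nat.succ_le_succ hnm
    linarith
  have hUnion : {y ∈ Ioi (0:ℝ) | ENNReal.ofReal l < f y} = ⋃ n, T n := by
    ext y
    simp only [mem_iUnion, mem_setOf_eq, hT]
    constructor
    · rintro ⟨hy1, hy2⟩
      rcases eq_or_ne (f y) ∞ with hfy | hfy
      · exact ⟨0, hy1, by rw [hfy]; exact ENNReal.ofReal_lt_top⟩
      · have hlt : l < (f y).toReal := (ENNReal.ofReal_lt_iff_lt_toReal hl hfy).mp hy2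
        obtain ⟨n, hn⟩ := exists_nat_one_div_lt (by linarith : (0:ℝ) < (f y).toReal - l)
        refine ⟨n, hy1, ?_⟩
        rw [ENNReal.ofReal_lt_iff_lt_toReal (by positivity) hfy]
        linarith
    · rintro ⟨n, hy1, hy2⟩
      refine ⟨hy1, lt_of_le_of_lt (ENNReal.ofReal_le_ofReal (by
        have : (0:ℝ) < 1/(n+1) := by positivity
        linarith)) hy2⟩
  have hsup : volume {y ∈ Ioi (0:ℝ) | ENNReal.ofReal l < f y} = ⨆ n, volume (T n) := by
    rw [hUnion]
    exact hTmono.directed_le.measure_iUnion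
  rw [hsup] at h
  have : ∀ n : ℕ, volume (T n) ≤ ENNReal.ofReal x := by
    intro n
    apply claim1
    apply lt_of_le_of_lt hc
    have h1 : (0:ℝ) < 1/(n+1) := by positivity
    rw [ENNReal.ofReal_lt_ofReal_iff (by linarith)]
    linarith
  exact absurd (iSup_le this) (not_le.mpr h)

/-- Hardy–Littlewood-type estimate on initial intervals. -/
lemma lintegral_Ioo_le_rearrE (f : ℝ → ℝ≥0∞) (hf : Measurable f) (a : ℝ) :
    ∫⁻ x in Ioo (0:ℝ) a, f x ≤ ∫⁻ x in Ioo (0:ℝ) a, rearrE f x := by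
  rw [layercakeE f hf, layercakeE (rearrE f) (rearrE_measurable f)]
  apply setLIntegral_mono
  · apply Antitone.measurable
    intro l1 l2 h12
    apply measure_mono
    intro y hy
    exact lt_of_le_of_lt (ENNReal.ofReal_le_ofReal h12) hy
  intro l hl
  rw [Measure.restrict_apply (measurableSet_lt measurable_const hf),
    Measure.restrict_apply (measurableSet_lt measurable_const (rearrE_measurable f))]
  set D := volume {y ∈ Ioi (0:ℝ) | ENNReal.ofReal l < f y} with hD
  have step1 : volume ({x | ENNReal.ofReal l < f x} ∩ Ioo 0 a) ≤ min (ENNReal.ofReal a) D := by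
    apply le_min
    · refine le_trans (measure_mono inter_subset_right) ?_
      rw [Real.volume_Ioo]
      exact ENNReal.ofReal_le_ofReal (by linarith)
    · apply measure_mono
      rintro y ⟨h1, h2⟩
      exact ⟨h2.1, h1⟩
  refine le_trans step1 ?_
  rcases eq_or_ne D ∞ with hDtop | hDtop
  · have hsub : Ioo (0:ℝ) a ⊆ {x | ENNReal.ofReal l < rearrE f x} ∩ Ioo 0 a := by
      intro x hx
      refine ⟨lt_rearrE (le_of_lt hl) ?_, hx⟩
      rw [← hD, hDtop]
      exact ENNReal.ofReal_lt_top
    refine le_trans ?_ (measure_mono hsub)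
    rw [Real.volume_Ioo]
    rcases le_or_gt a 0 with h | h
    · simp [ENNReal.ofReal_eq_zero.mpr (by linarith : a - 0 ≤ 0)]
    · exact le_trans (min_le_left _ _) (le_of_eq (by rw [sub_zero]))
  · set b := min a D.toReal with hb
    have hsub : Ioo (0:ℝ) b ⊆ {x | ENNReal.ofReal l < rearrE f x} ∩ Ioo 0 a := by
      rintro x ⟨hx0, hxb⟩
      refine ⟨lt_rearrE (le_of_lt hl) ?_, hx0, lt_of_lt_of_le hxb (min_le_left _ _)⟩
      rw [← hD]
      exact (ENNReal.ofReal_lt_iff_lt_toReal (le_of_lt hx0) hDtop).mpr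
        (lt_of_lt_of_le hxb (min_le_right _ _))
    refine le_trans ?_ (measure_mono hsub)
    rw [Real.volume_Ioo, sub_zero]
    rcases le_total a D.toReal with hc | hc
    · rw [hb, min_eq_left hc]
      exact min_le_left _ _
    · rw [hb, min_eq_right hc, ENNReal.ofReal_toReal hDtop]
      exact min_le_right _ _

lemma lintegral_rpow_Ioo {η : ℝ} (hη0 : 0 < η) (hη1 : η < 1) {c : ℝ} (hc : 0 < c) :
    ∫⁻ x in Ioo (0:ℝ) c, ENNReal.ofReal (x ^ (-η)) =
      ENNReal.ofReal (c ^ (1-η) / (1-η)) := by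
  rw [Measure.restrict_congr_set Ioo_ae_eq_Ioc]
  have hint : IntegrableOn (fun x : ℝ => x ^ (-η)) (Ioc 0 c) volume := by
    have := intervalIntegral.intervalIntegrable_rpow' (r := -η) (a := 0) (b := c) (by linarith)
    rwa [intervalIntegrable_iff_integrableOn_Ioc_of_le hc.le] at this
  rw [← MeasureTheory.ofReal_integral_eq_lintegral_ofReal hint ?nn]
  case nn =>
    filter_upwards [ae_restrict_mem measurableSet_Ioc] with x hx
    exact Real.rpow_nonneg hx.1.le _
  congr 1
  rw [← intervalIntegral.integral_of_le hc.le,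
    integral_rpow (Or.inl (by linarith : (-1:ℝ) < -η)),
    Real.zero_rpow (by linarith : -η + 1 ≠ 0)]
  rw [show -η + 1 = 1 - η by ring]
  ring


/-- The operator `Q_η`: `(Q_η f)(t) = t^{-η} ∫_t^∞ s^η f(s) ds/s`. -/
noncomputable def Qop (η : ℝ) (f : ℝ → ℝ≥0∞) (t : ℝ) : ℝ≥0∞ :=
  ENNReal.ofReal (t ^ (-η)) * ∫⁻ s in Ioi t, ENNReal.ofReal (s ^ (η - 1)) * f s


lemma Qop_part1 {η : ℝ} (hη0 : 0 < η) (hη1 : η < 1) (f : ℝ → ℝ≥0∞) (hf : Measurable f)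
    {t : ℝ} (ht : 0 < t) :
    (∫⁻ x in Ioo (0 : ℝ) t, Qop η f x) =
      ENNReal.ofReal (1 / (1 - η)) *
        ∫⁻ u in Ioi (0 : ℝ), ENNReal.ofReal (min 1 (t / u) ^ (1 - η)) * f u := by
  set G : ℝ × ℝ → ℝ≥0∞ := fun p => ({q : ℝ × ℝ | q.1 < q.2}).indicator
    (fun q => ENNReal.ofReal (q.1 ^ (-η)) * (ENNReal.ofReal (q.2 ^ (η-1)) * f q.2)) p with hG
  have hGm : Measurable G := by
    apply Measurable.indicator
    · exact ((measurable_fst.pow_const (-η)).ennreal_ofReal).mul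
        (((measurable_snd.pow_const (η-1)).ennreal_ofReal).mul (hf.comp measurable_snd))
    · exact measurableSet_lt measurable_fst measurable_snd
  have stepA : ∀ x : ℝ, Qop η f x = ∫⁻ s, G (x, s) := by
    intro x
    rw [Qop, ← lintegral_const_mul (f := fun s => ENNReal.ofReal (s ^ (η-1)) * f s) _ (((measurable_id'.pow_const (η-1)).ennreal_ofReal).mul hf),
      ← lintegral_indicator measurableSet_Ioi]
    congr 1
  have stepB : (∫⁻ x in Ioo (0 : ℝ) t, Qop η f x)
      = ∫⁻ s, (∫⁻ x in Ioo (0:ℝ) t, G (x, s)) := by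
    rw [lintegral_congr (μ := volume.restrict (Ioo 0 t)) stepA]
    exact lintegral_lintegral_swap (hGm.aemeasurable)
  rw [stepB]
  have stepC : ∀ s : ℝ, (∫⁻ x in Ioo (0:ℝ) t, G (x, s)) =
      (Ioi (0:ℝ)).indicator (fun s => ENNReal.ofReal (1 / (1 - η)) *
        (ENNReal.ofReal (min 1 (t / s) ^ (1 - η)) * f s)) s := by
    intro s
    have hGs : ∀ x : ℝ, G (x, s) = (Iio s).indicator (fun x => ENNReal.ofReal (x ^ (-η))) x *
        (ENNReal.ofReal (s ^ (η-1)) * f s) := by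
      intro x
      by_cases h : x < s
      · simp [hG, Set.indicator_apply, h]
      · simp [hG, Set.indicator_apply, h]
    rw [lintegral_congr (μ := volume.restrict (Ioo 0 t)) hGs,
      lintegral_mul_const _ ((measurable_id'.pow_const (-η)).ennreal_ofReal.indicator
        measurableSet_Iio),
      lintegral_indicator measurableSet_Iio, Measure.restrict_restrict measurableSet_Iio]
    rcases le_or_gt s 0 with hs | hs
    · have hempty : Iio s ∩ Ioo (0:ℝ) t = ∅ := by
        ext x
        simp only [mem_inter_iff, mem_Iio, mem_Ioo, mem_empty_iff_false, iff_false]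
        rintro ⟨h1, h2, h3⟩
        linarith
      rw [hempty, Set.indicator_of_notMem (by simp [hs] : s ∉ Ioi (0:ℝ))]
      simp
    · have hset : Iio s ∩ Ioo (0:ℝ) t = Ioo 0 (min t s) := by
        ext x
        simp only [mem_inter_iff, mem_Iio, mem_Ioo, lt_min_iff]
        tauto
      rw [hset, lintegral_rpow_Ioo hη0 hη1 (lt_min ht hs),
        Set.indicator_of_mem (mem_Ioi.mpr hs)]
      -- now real arithmetic
      have hreal : (min t s ^ (1-η) / (1-η)) * s ^ (η-1)
          = (1 / (1 - η)) * min 1 (t / s) ^ (1 - η) := by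
        have h1 : s ^ (η - 1) = (s ^ (1-η))⁻¹ := by
          rw [show η - 1 = -(1-η) by ring, Real.rpow_neg hs.le]
        have h2 : min t s ^ (1-η) * (s ^ (1-η))⁻¹ = (min t s / s) ^ (1-η) := by
          rw [Real.div_rpow (le_min ht.le hs.le) hs.le, div_eq_mul_inv]
        have h3 : min t s / s = min 1 (t / s) := by
          rw [← min_div_div_right hs.le t s, div_self hs.ne', min_comm]
        rw [h1, div_mul_eq_mul_div, h2, h3]
        ring
      rw [show ENNReal.ofReal (min t s ^ (1-η) / (1-η)) * (ENNReal.ofReal (s ^ (η-1)) * f s)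
          = ENNReal.ofReal ((min t s ^ (1-η) / (1-η)) * s ^ (η-1)) * f s by
        rw [ENNReal.ofReal_mul (div_nonneg (Real.rpow_nonneg (le_min ht.le hs.le) _)
          (by linarith)), mul_assoc]]
      rw [hreal, ENNReal.ofReal_mul (one_div_nonneg.mpr (by linarith)), mul_assoc]
  rw [lintegral_congr stepC, lintegral_indicator measurableSet_Ioi,
    lintegral_const_mul (f := fun u => ENNReal.ofReal (min 1 (t / u) ^ (1 - η)) * f u) _ (((measurable_const.min ((measurable_const.div
      measurable_id'))).pow_const (1-η)).ennreal_ofReal.mul hf)]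

lemma kernel_rep {η t : ℝ} (hη1 : η < 1) (ht : 0 < t) (g : ℝ → ℝ≥0∞) (hg : Measurable g) :
    ∫⁻ u in Ioi (0:ℝ), ENNReal.ofReal (min 1 (t / u) ^ (1 - η)) * g u =
      ∫⁻ l in Ioi (0:ℝ), (∫⁻ u in {u : ℝ | l < min 1 (t / u) ^ (1 - η)} ∩ Ioi 0, g u) := by
  set k : ℝ → ℝ := fun u => min 1 (t / u) ^ (1 - η) with hk
  have hkm : Measurable k :=
    (measurable_const.min (measurable_const.div measurable_id')).pow_const _
  set F : ℝ × ℝ → ℝ≥0∞ := fun p => ({p : ℝ × ℝ | p.1 < k p.2}).indicator (fun p => g p.2) p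
    with hF
  have hFm : Measurable F :=
    (hg.comp measurable_snd).indicator (measurableSet_lt measurable_fst (hkm.comp measurable_snd))
  have hpt : ∀ u : ℝ, ENNReal.ofReal (k u) * g u = ∫⁻ l in Ioi (0:ℝ), F (l, u) := by
    intro u
    have h1 : (fun l => F (l, u)) = (Iio (k u)).indicator (fun _ => g u) := by
      ext l
      simp [hF, Set.indicator_apply]
    rw [h1, lintegral_indicator measurableSet_Iio, Measure.restrict_restrict measurableSet_Iio,
      show Iio (k u) ∩ Ioi (0:ℝ) = Ioo 0 (k u) by ext x; simp [mem_Ioo, and_comm],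
      setLIntegral_const, Real.volume_Ioo, sub_zero, mul_comm]
  calc ∫⁻ u in Ioi (0:ℝ), ENNReal.ofReal (k u) * g u
      = ∫⁻ u in Ioi (0:ℝ), (∫⁻ l in Ioi (0:ℝ), F (l, u)) :=
        lintegral_congr fun u => hpt u
    _ = ∫⁻ l in Ioi (0:ℝ), (∫⁻ u in Ioi (0:ℝ), F (l, u)) :=
        lintegral_lintegral_swap ((hFm.comp measurable_swap).aemeasurable)
    _ = ∫⁻ l in Ioi (0:ℝ), (∫⁻ u in {u : ℝ | l < k u} ∩ Ioi 0, g u) := by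
        apply lintegral_congr
        intro l
        have h2 : (fun u => F (l, u)) = ({u : ℝ | l < k u}).indicator g := by
          ext u
          simp [hF, Set.indicator_apply]
        rw [h2, lintegral_indicator (measurableSet_lt measurable_const hkm),
          Measure.restrict_restrict (measurableSet_lt measurable_const hkm)]

lemma superlevel_empty {η t l : ℝ} (hη1 : η < 1) (ht : 0 < t) (hl : 1 ≤ l) :
    {u : ℝ | l < min 1 (t / u) ^ (1 - η)} ∩ Ioi 0 = ∅ := by
  ext u
  simp only [mem_inter_iff, mem_setOf_eq, mem_Ioi, mem_empty_iff_false, iff_false, not_and]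
  intro h hu
  have h1 : min 1 (t / u) ^ (1 - η) ≤ 1 :=
    Real.rpow_le_one (le_min zero_le_one (div_nonneg ht.le hu.le)) (min_le_left _ _)
      (by linarith)
  linarith

lemma superlevel_Ioo {η t l : ℝ} (hη1 : η < 1) (ht : 0 < t) (hl0 : 0 < l) (hl1 : l < 1) :
    {u : ℝ | l < min 1 (t / u) ^ (1 - η)} ∩ Ioi 0 = Ioo 0 (t / l ^ (1-η)⁻¹) := by
  have h1η : (0:ℝ) < 1 - η := by linarith
  set m : ℝ := l ^ (1-η)⁻¹ with hm
  have hm0 : 0 < m := Real.rpow_pos_of_pos hl0 _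
  ext u
  simp only [mem_inter_iff, mem_setOf_eq, mem_Ioi, mem_Ioo]
  constructor
  · rintro ⟨h, hu⟩
    refine ⟨hu, ?_⟩
    have htu : 0 < t / u := div_pos ht hu
    have h2 : l < (t / u) ^ (1 - η) :=
      lt_of_lt_of_le h (Real.rpow_le_rpow (le_min zero_le_one htu.le)
        (min_le_right _ _) h1η.le)
    have h3 : m < t / u := by
      rw [hm]
      exact (Real.rpow_inv_lt_iff_of_pos hl0.le htu.le h1η).mpr h2
    rw [lt_div_iff₀ hm0]
    rw [lt_div_iff₀ hu] at h3
    linarith [mul_comm u m]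
  · rintro ⟨hu, hum⟩
    refine ⟨?_, hu⟩
    have h3 : m < t / u := by
      rw [lt_div_iff₀ hu]
      rw [lt_div_iff₀ hm0] at hum
      linarith [mul_comm u m]
    have h2 : l < (t / u) ^ (1 - η) := by
      rw [hm] at h3
      exact (Real.rpow_inv_lt_iff_of_pos hl0.le (div_pos ht hu).le h1η).mp h3
    rcases le_total 1 (t / u) with hc | hc
    · rw [min_eq_left hc, Real.one_rpow]
      exact hl1
    · rw [min_eq_right hc]
      exact h2

lemma kernel_mono {η t : ℝ} (hη0 : 0 < η) (hη1 : η < 1) (ht : 0 < t)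
    (f : ℝ → ℝ≥0∞) (hf : Measurable f) :
    ∫⁻ u in Ioi (0:ℝ), ENNReal.ofReal (min 1 (t / u) ^ (1 - η)) * f u ≤
      ∫⁻ u in Ioi (0:ℝ), ENNReal.ofReal (min 1 (t / u) ^ (1 - η)) * rearrE f u := by
  rw [kernel_rep hη1 ht f hf, kernel_rep hη1 ht (rearrE f) (rearrE_measurable f)]
  apply lintegral_mono_ae
  filter_upwards [ae_restrict_mem measurableSet_Ioi] with l hl
  rcases le_or_gt 1 l with hl1 | hl1
  · rw [superlevel_empty hη1 ht hl1]
    simp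
  · rw [superlevel_Ioo hη1 ht hl hl1]
    exact lintegral_Ioo_le_rearrE f hf _

/-- For `0 < η < 1` and every non-negative measurable `f` on
`(0,∞)`, and every `t > 0`:
`∫₀^t (Q_η f)(x) dx = (1/(1−η)) ∫₀^∞ min(1, t/u)^{1−η} f(u) du ≤ ∫₀^t (Q_η f*)(x) dx`,
where `f*` is the non-increasing rearrangement of `f`. -/
theorem Qop_integral_identity_and_bound (η : ℝ) (hη0 : 0 < η) (hη1 : η < 1)
    (f : ℝ → ℝ≥0∞) (hf : Measurable f) (t : ℝ) (ht : 0 < t) :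
    (∫⁻ x in Ioo (0 : ℝ) t, Qop η f x) =
      ENNReal.ofReal (1 / (1 - η)) *
        ∫⁻ u in Ioi (0 : ℝ), ENNReal.ofReal (min 1 (t / u) ^ (1 - η)) * f u ∧
    ENNReal.ofReal (1 / (1 - η)) *
        (∫⁻ u in Ioi (0 : ℝ), ENNReal.ofReal (min 1 (t / u) ^ (1 - η)) * f u) ≤
      ∫⁻ x in Ioo (0 : ℝ) t, Qop η (rearrE f) x := by
  refine ⟨Qop_part1 hη0 hη1 f hf ht, ?_⟩
  rw [Qop_part1 hη0 hη1 (rearrE f) (rearrE_measurable f) ht]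
  exact mul_le_mul_right (kernel_mono hη0 hη1 ht f hf) _
end

section
/- Let (X₀, X₁) be a compatible couple of Banach spaces and let F₀ be a Banach lattice over ((0,∞), dt/t) such that Ξ(t) := ‖min(·, t)‖_{F₀} satisfies Ξ(1) < ∞. Let φ be the generalized reverse function of Ξ. Then for all t ∈ (Ξ(0), Ξ(∞)) and all f ∈ (X₀,X₁)_{F₀} + X₁: K(f, t; (X₀,X₁)_{F₀}, X₁) ≳ ‖K(f, s; X₀, X₁) χ_{(0,φ(t))}(s)‖_{F₀} + K(f, φ(t); X₀, X₁) · ‖χ_{(φ(t),∞)}‖_{F₀}, with an implicit constant independent of f and t. -/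
open Set ENNReal

/-- The Peetre K-functional of a compatible couple `(X₀, X₁)`, realized as two
submodules of a common ambient space `Z` carrying norms `n₀` and `n₁`. -/
noncomputable def Kfun {Z : Type*} [AddCommGroup Z] [Module ℝ Z]
    (X₀ X₁ : Submodule ℝ Z) (n₀ n₁ : Z → ℝ) (f : Z) (t : ℝ) : ℝ :=
  sInf {r : ℝ | ∃ f₀ ∈ X₀, ∃ f₁ ∈ X₁, f = f₀ + f₁ ∧ r = n₀ f₀ + t * n₁ f₁}

section Aux

variable {Z : Type*} [AddCommGroup Z] [Module ℝ Z]
    (X₀ X₁ : Submodule ℝ Z) (n₀ n₁ : Z → ℝ)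

variable (h₀nn : ∀ z, 0 ≤ n₀ z) (h₁nn : ∀ z, 0 ≤ n₁ z)

include h₀nn h₁nn

lemma Kfun_bddBelow (f : Z) {t : ℝ} (ht : 0 ≤ t) :
    BddBelow {r : ℝ | ∃ f₀ ∈ X₀, ∃ f₁ ∈ X₁, f = f₀ + f₁ ∧ r = n₀ f₀ + t * n₁ f₁} := by
  refine ⟨0, ?_⟩
  rintro r ⟨f₀, -, f₁, -, -, rfl⟩
  exact add_nonneg (h₀nn _) (mul_nonneg ht (h₁nn _))

lemma Kfun_nonneg (f : Z) {t : ℝ} (ht : 0 ≤ t) : 0 ≤ Kfun X₀ X₁ n₀ n₁ f t := by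
  unfold Kfun
  rcases Set.eq_empty_or_nonempty
      {r : ℝ | ∃ f₀ ∈ X₀, ∃ f₁ ∈ X₁, f = f₀ + f₁ ∧ r = n₀ f₀ + t * n₁ f₁} with h | h
  · rw [h, Real.sInf_empty]
  · refine Real.sInf_nonneg ?_
    rintro r ⟨f₀, -, f₁, -, -, rfl⟩
    exact add_nonneg (h₀nn _) (mul_nonneg ht (h₁nn _))

lemma Kfun_mono (f : Z) {s s' : ℝ} (hs : 0 ≤ s) (hss' : s ≤ s') :
    Kfun X₀ X₁ n₀ n₁ f s ≤ Kfun X₀ X₁ n₀ n₁ f s' := by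
  unfold Kfun
  rcases em (∃ f₀ ∈ X₀, ∃ f₁ ∈ X₁, f = f₀ + f₁) with ⟨f₀, h0, f₁, h1, hf⟩ | hne
  · refine le_csInf ⟨_, f₀, h0, f₁, h1, hf, rfl⟩ ?_
    rintro r ⟨g₀, hg0, g₁, hg1, hf', rfl⟩
    calc sInf {r : ℝ | ∃ f₀ ∈ X₀, ∃ f₁ ∈ X₁, f = f₀ + f₁ ∧ r = n₀ f₀ + s * n₁ f₁}
        ≤ n₀ g₀ + s * n₁ g₁ :=
          csInf_le (Kfun_bddBelow X₀ X₁ n₀ n₁ h₀nn h₁nn f hs) ⟨g₀, hg0, g₁, hg1, hf', rfl⟩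
      _ ≤ n₀ g₀ + s' * n₁ g₁ := by nlinarith [h₁nn g₁]
  · have e : ∀ u : ℝ, {r : ℝ | ∃ f₀ ∈ X₀, ∃ f₁ ∈ X₁, f = f₀ + f₁ ∧ r = n₀ f₀ + u * n₁ f₁}
        = (∅ : Set ℝ) := by
      intro u
      apply Set.eq_empty_iff_forall_notMem.mpr
      rintro r ⟨f₀, h0, f₁, h1, hf, -⟩
      exact hne ⟨f₀, h0, f₁, h1, hf⟩
    rw [e s, e s']

lemma Kfun_sub (h₁add : ∀ x y, n₁ (x + y) ≤ n₁ x + n₁ y)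
    {f g h : Z} (hfgh : f = g + h) (hg : g ∈ X₀ ⊔ X₁) (hh : h ∈ X₁) {s : ℝ} (hs : 0 ≤ s) :
    Kfun X₀ X₁ n₀ n₁ f s ≤ Kfun X₀ X₁ n₀ n₁ g s + s * n₁ h := by
  obtain ⟨g₀, hg₀, g₁, hg₁, hg'⟩ := Submodule.mem_sup.mp hg
  rw [← sub_le_iff_le_add]
  unfold Kfun
  refine le_csInf ⟨_, g₀, hg₀, g₁, hg₁, hg'.symm, rfl⟩ ?_
  rintro r ⟨f₀, h0, f₁, h1, hgd, rfl⟩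
  rw [sub_le_iff_le_add]
  calc Kfun X₀ X₁ n₀ n₁ f s ≤ n₀ f₀ + s * n₁ (f₁ + h) :=
        csInf_le (Kfun_bddBelow X₀ X₁ n₀ n₁ h₀nn h₁nn f hs)
          ⟨f₀, h0, f₁ + h, add_mem h1 hh, by rw [hfgh, hgd, add_assoc], rfl⟩
    _ ≤ n₀ f₀ + s * (n₁ f₁ + n₁ h) := by
        have := mul_le_mul_of_nonneg_left (h₁add f₁ h) hs; linarith
    _ = (n₀ f₀ + s * n₁ f₁) + s * n₁ h := by ring

end Aux

lemma holm_aux {x t : ℝ≥0∞} {φ : ℝ} (hφ : 0 < φ) (ht : t ≠ ⊤)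
    (H : ∀ τ : ℝ, 0 < τ → τ < φ → x ≤ ENNReal.ofReal (φ / τ) * t) : x ≤ t := by
  have H' : ∀ c : ℝ, 1 < c → x ≤ ENNReal.ofReal c * t := by
    intro c hc
    have hc0 : 0 < c := lt_trans one_pos hc
    have hτφ : φ / c < φ := by
      rw [div_lt_iff₀ hc0]; nlinarith
    have := H (φ / c) (by positivity) hτφ
    have hd : φ / (φ / c) = c := by field_simp
    rwa [hd] at this
  have htend : Filter.Tendsto (fun c : ℝ => ENNReal.ofReal c * t)
      (nhdsWithin 1 (Ioi 1)) (nhds t) := by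
    have h1 : Filter.Tendsto (fun c : ℝ => ENNReal.ofReal c)
        (nhdsWithin 1 (Ioi 1)) (nhds 1) := by
      have := (ENNReal.continuous_ofReal.tendsto 1)
      rw [ENNReal.ofReal_one] at this
      exact this.mono_left nhdsWithin_le_nhds
    have := ENNReal.Tendsto.mul_const h1 (Or.inr ht)
    rwa [one_mul] at this
  exact ge_of_tendsto htend (Filter.eventually_of_mem self_mem_nhdsWithin
    fun c hc => H' c hc)

/-- lower estimate in the abstract Holmstedt formula:
Let `(X₀,X₁)` be a compatible couple of Banach spaces, `F₀` a Banach lattice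
over `((0,∞), dt/t)` with norm functional `N`, with fundamental function
`Ξ(τ) := ‖min(·,τ)‖_{F₀}` satisfying `Ξ(1) < ∞`, and `φ` the generalized
reverse of `Ξ`. Then for all `t ∈ (Ξ(0), Ξ(∞))` and `f ∈ (X₀,X₁)_{F₀} + X₁`:
`‖K(f,·;X₀,X₁)χ_{(0,φ(t))}‖_{F₀} + K(f,φ(t);X₀,X₁)‖χ_{(φ(t),∞)}‖_{F₀}
  ≲ K(f,t;(X₀,X₁)_{F₀},X₁)`, with a constant independent of `f` and `t`.
Here `(X₀,X₁)_{F₀}` has norm `f ↦ N(K(f,·;X₀,X₁))`, `Ξ(0)` and `Ξ(∞)` are the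
infimum and supremum of `Ξ` over `(0,∞)`, and the K-functional of the couple
`((X₀,X₁)_{F₀}, X₁)` is computed as an infimum over decompositions. -/
theorem holmstedt_lower {Z : Type*} [AddCommGroup Z] [Module ℝ Z]
    (X₀ X₁ : Submodule ℝ Z) (n₀ n₁ : Z → ℝ)
    (h₀nn : ∀ z, 0 ≤ n₀ z) (h₁nn : ∀ z, 0 ≤ n₁ z)
    (h₀z : n₀ 0 = 0) (h₁z : n₁ 0 = 0)
    (h₀add : ∀ x y, n₀ (x + y) ≤ n₀ x + n₀ y)
    (h₁add : ∀ x y, n₁ (x + y) ≤ n₁ x + n₁ y)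
    (h₀hom : ∀ (c : ℝ) (x : Z), n₀ (c • x) = |c| * n₀ x)
    (h₁hom : ∀ (c : ℝ) (x : Z), n₁ (c • x) = |c| * n₁ x)
    (N : (ℝ → ℝ) → ℝ≥0∞)
    (hlat : ∀ u v : ℝ → ℝ, (∀ s ∈ Ioi (0 : ℝ), |u s| ≤ |v s|) → N u ≤ N v)
    (hNadd : ∀ u v : ℝ → ℝ, N (u + v) ≤ N u + N v)
    (hNhom : ∀ (c : ℝ) (u : ℝ → ℝ), 0 ≤ c →
      N (fun s => c * u s) = ENNReal.ofReal c * N u)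
    (hΞ1 : N (fun s => min s 1) ≠ ⊤) :
    ∃ C : ℝ≥0∞, 0 < C ∧ C ≠ ⊤ ∧ ∀ (t : ℝ≥0∞) (f : Z),
      (⨅ τ : Ioi (0 : ℝ), N (fun s => min s τ.1)) < t →
      t < (⨆ τ : Ioi (0 : ℝ), N (fun s => min s τ.1)) →
      (∃ g h : Z, f = g + h ∧ g ∈ X₀ ⊔ X₁ ∧
        N (fun s => Kfun X₀ X₁ n₀ n₁ g s) ≠ ⊤ ∧ h ∈ X₁) →
      ∀ φ : ℝ, φ = sInf {τ : ℝ | 0 < τ ∧ t < N (fun s => min s τ)} →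
      N (fun s => indicator (Ioo 0 φ) (fun s => Kfun X₀ X₁ n₀ n₁ f s) s)
          + ENNReal.ofReal (Kfun X₀ X₁ n₀ n₁ f φ) * N (indicator (Ioi φ) 1)
        ≤ C * sInf {r : ℝ≥0∞ | ∃ g h : Z, f = g + h ∧ g ∈ X₀ ⊔ X₁ ∧ h ∈ X₁ ∧
            r = N (fun s => Kfun X₀ X₁ n₀ n₁ g s) + t * ENNReal.ofReal (n₁ h)} := by
  refine ⟨2, by norm_num, by norm_num, ?_⟩
  intro t f hlow hhigh _hex φ hφdef
  have ht_ne_top : t ≠ ⊤ := by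
    obtain ⟨⟨τ, hτ⟩, hτt⟩ := lt_iSup_iff.mp hhigh
    exact hτt.ne_top
  -- monotonicity of Ξ
  have hΞmono : ∀ a b : ℝ, 0 < a → a ≤ b →
      N (fun s => min s a) ≤ N (fun s => min s b) := by
    intro a b ha hab
    refine hlat _ _ fun s hs => ?_
    have h1 : 0 ≤ min s a := le_min (le_of_lt hs) ha.le
    rw [abs_of_nonneg h1, abs_of_nonneg (h1.trans (min_le_min le_rfl hab))]
    exact min_le_min le_rfl hab
  -- the defining set of φ
  obtain ⟨⟨τ₀, hτ₀⟩, hτ₀t⟩ := lt_iSup_iff.mp hhigh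
  obtain ⟨⟨τ₁, hτ₁⟩, hτ₁t⟩ := iInf_lt_iff.mp hlow
  simp only [Set.mem_Ioi] at hτ₀ hτ₁
  have hφpos : 0 < φ := by
    rw [hφdef]
    have hle : τ₁ ≤ sInf {τ : ℝ | 0 < τ ∧ t < N (fun s => min s τ)} := by
      refine le_csInf ⟨τ₀, hτ₀, hτ₀t⟩ ?_
      rintro τ ⟨hτpos, hτt⟩
      by_contra hlt
      push_neg at hlt
      exact absurd ((hΞmono τ τ₁ hτpos hlt.le).trans_lt hτ₁t) (not_lt.mpr hτt.le)
    exact hτ₁.trans_le hle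
  have hΞle : ∀ τ : ℝ, 0 < τ → τ < φ → N (fun s => min s τ) ≤ t := by
    intro τ hτ hτφ
    by_contra hc
    push_neg at hc
    have : φ ≤ τ := by
      rw [hφdef]
      exact csInf_le ⟨0, fun x hx => hx.1.le⟩ ⟨hτ, hc⟩
    linarith
  -- N (s χ_{(0,φ)}) ≤ t
  have hA : N (indicator (Ioo 0 φ) id) ≤ t := by
    refine holm_aux hφpos ht_ne_top fun τ hτ hτφ => ?_
    calc N (indicator (Ioo 0 φ) id)
        ≤ N (fun s => (φ / τ) * min s τ) := by
          refine hlat _ _ fun s hs => ?_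
          rw [Set.mem_Ioi] at hs
          have hm : 0 ≤ min s τ := le_min hs.le hτ.le
          have hrhs : 0 ≤ (φ / τ) * min s τ := mul_nonneg (by positivity) hm
          rw [abs_of_nonneg hrhs]
          by_cases hmem : s ∈ Ioo 0 φ
          · rw [Set.indicator_of_mem hmem, id_eq, abs_of_nonneg hs.le]
            rcases le_total s τ with h1 | h1
            · rw [min_eq_left h1]
              have : (1 : ℝ) ≤ φ / τ := (one_le_div hτ).mpr hτφ.le
              nlinarith
            · rw [min_eq_right h1]
              rw [div_mul_eq_mul_div, le_div_iff₀ hτ]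
              have := hmem.2
              nlinarith
          · rw [Set.indicator_of_notMem hmem, abs_zero]
            exact hrhs
      _ = ENNReal.ofReal (φ / τ) * N (fun s => min s τ) := hNhom _ _ (by positivity)
      _ ≤ ENNReal.ofReal (φ / τ) * t := mul_le_mul_right (hΞle τ hτ hτφ) _
  -- ofReal φ * N (χ_{(φ,∞)}) ≤ t
  have hB : ENNReal.ofReal φ * N (indicator (Ioi φ) 1) ≤ t := by
    rw [← hNhom φ _ hφpos.le]
    refine holm_aux hφpos ht_ne_top fun τ hτ hτφ => ?_
    calc N (fun s => φ * indicator (Ioi φ) 1 s)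
        ≤ N (fun s => (φ / τ) * min s τ) := by
          refine hlat _ _ fun s hs => ?_
          rw [Set.mem_Ioi] at hs
          have hm : 0 ≤ min s τ := le_min hs.le hτ.le
          have hrhs : 0 ≤ (φ / τ) * min s τ := mul_nonneg (by positivity) hm
          rw [abs_of_nonneg hrhs]
          by_cases hmem : s ∈ Ioi φ
          · rw [Set.indicator_of_mem hmem, Pi.one_apply, mul_one, abs_of_nonneg hφpos.le]
            rw [Set.mem_Ioi] at hmem
            have : min s τ = τ := min_eq_right (by linarith)
            rw [this, div_mul_cancel₀ _ hτ.ne']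
          · rw [Set.indicator_of_notMem hmem, mul_zero, abs_zero]
            exact hrhs
      _ = ENNReal.ofReal (φ / τ) * N (fun s => min s τ) := hNhom _ _ (by positivity)
      _ ≤ ENNReal.ofReal (φ / τ) * t := mul_le_mul_right (hΞle τ hτ hτφ) _
  -- main per-decomposition bound
  have key : ∀ r ∈ {r : ℝ≥0∞ | ∃ g h : Z, f = g + h ∧ g ∈ X₀ ⊔ X₁ ∧ h ∈ X₁ ∧
      r = N (fun s => Kfun X₀ X₁ n₀ n₁ g s) + t * ENNReal.ofReal (n₁ h)},
      N (fun s => indicator (Ioo 0 φ) (fun s => Kfun X₀ X₁ n₀ n₁ f s) s)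
        + ENNReal.ofReal (Kfun X₀ X₁ n₀ n₁ f φ) * N (indicator (Ioi φ) 1) ≤ 2 * r := by
    rintro r ⟨g, h, hfgh, hg, hh, rfl⟩
    have term1 : N (fun s => indicator (Ioo 0 φ) (fun s => Kfun X₀ X₁ n₀ n₁ f s) s)
        ≤ N (fun s => Kfun X₀ X₁ n₀ n₁ g s) + ENNReal.ofReal (n₁ h) * t := by
      calc N (fun s => indicator (Ioo 0 φ) (fun s => Kfun X₀ X₁ n₀ n₁ f s) s)
          ≤ N ((fun s => Kfun X₀ X₁ n₀ n₁ g s)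
              + (fun s => n₁ h * indicator (Ioo 0 φ) id s)) := by
            refine hlat _ _ fun s hs => ?_
            rw [Set.mem_Ioi] at hs
            have hKg : 0 ≤ Kfun X₀ X₁ n₀ n₁ g s := Kfun_nonneg X₀ X₁ n₀ n₁ h₀nn h₁nn g hs.le
            have hind : 0 ≤ indicator (Ioo 0 φ) id s := by
              by_cases hmem : s ∈ Ioo 0 φ
              · rw [Set.indicator_of_mem hmem, id_eq]; exact hs.le
              · rw [Set.indicator_of_notMem hmem]
            have hrhs : 0 ≤ Kfun X₀ X₁ n₀ n₁ g s + n₁ h * indicator (Ioo 0 φ) id s :=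
              add_nonneg hKg (mul_nonneg (h₁nn h) hind)
            rw [Pi.add_apply, abs_of_nonneg hrhs]
            by_cases hmem : s ∈ Ioo 0 φ
            · rw [Set.indicator_of_mem hmem, Set.indicator_of_mem hmem, id_eq,
                abs_of_nonneg (Kfun_nonneg X₀ X₁ n₀ n₁ h₀nn h₁nn f hs.le)]
              have := Kfun_sub X₀ X₁ n₀ n₁ h₀nn h₁nn h₁add hfgh hg hh hs.le
              linarith [this]
            · rw [Set.indicator_of_notMem hmem, abs_zero]
              exact hrhs
        _ ≤ N (fun s => Kfun X₀ X₁ n₀ n₁ g s)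
              + N (fun s => n₁ h * indicator (Ioo 0 φ) id s) := hNadd _ _
        _ = N (fun s => Kfun X₀ X₁ n₀ n₁ g s)
              + ENNReal.ofReal (n₁ h) * N (indicator (Ioo 0 φ) id) := by
            rw [hNhom _ _ (h₁nn h)]
        _ ≤ N (fun s => Kfun X₀ X₁ n₀ n₁ g s) + ENNReal.ofReal (n₁ h) * t :=
            add_le_add_right (mul_le_mul_right hA _) _
    have term2 : ENNReal.ofReal (Kfun X₀ X₁ n₀ n₁ f φ) * N (indicator (Ioi φ) 1)
        ≤ N (fun s => Kfun X₀ X₁ n₀ n₁ g s) + ENNReal.ofReal (n₁ h) * t := by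
      have hKfφ : Kfun X₀ X₁ n₀ n₁ f φ ≤ Kfun X₀ X₁ n₀ n₁ g φ + φ * n₁ h :=
        Kfun_sub X₀ X₁ n₀ n₁ h₀nn h₁nn h₁add hfgh hg hh hφpos.le
      calc ENNReal.ofReal (Kfun X₀ X₁ n₀ n₁ f φ) * N (indicator (Ioi φ) 1)
          ≤ (ENNReal.ofReal (Kfun X₀ X₁ n₀ n₁ g φ) + ENNReal.ofReal (φ * n₁ h))
              * N (indicator (Ioi φ) 1) := by
            refine mul_le_mul_left ((ENNReal.ofReal_le_ofReal hKfφ).trans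
              ENNReal.ofReal_add_le) _
        _ = ENNReal.ofReal (Kfun X₀ X₁ n₀ n₁ g φ) * N (indicator (Ioi φ) 1)
              + ENNReal.ofReal (φ * n₁ h) * N (indicator (Ioi φ) 1) := add_mul _ _ _
        _ ≤ N (fun s => Kfun X₀ X₁ n₀ n₁ g s) + ENNReal.ofReal (n₁ h) * t := by
            refine add_le_add ?_ ?_
            · rw [← hNhom _ _ (Kfun_nonneg X₀ X₁ n₀ n₁ h₀nn h₁nn g hφpos.le)]
              refine hlat _ _ fun s hs => ?_
              rw [Set.mem_Ioi] at hs
              have hKg : 0 ≤ Kfun X₀ X₁ n₀ n₁ g s :=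
                Kfun_nonneg X₀ X₁ n₀ n₁ h₀nn h₁nn g hs.le
              rw [abs_of_nonneg hKg]
              by_cases hmem : s ∈ Ioi φ
              · rw [Set.indicator_of_mem hmem, Pi.one_apply, mul_one,
                  abs_of_nonneg (Kfun_nonneg X₀ X₁ n₀ n₁ h₀nn h₁nn g hφpos.le)]
                exact Kfun_mono X₀ X₁ n₀ n₁ h₀nn h₁nn g hφpos.le (le_of_lt hmem)
              · rw [Set.indicator_of_notMem hmem, mul_zero, abs_zero]
                exact hKg
            · rw [ENNReal.ofReal_mul hφpos.le, mul_comm (ENNReal.ofReal φ), mul_assoc]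
              exact mul_le_mul_right hB _
    calc N (fun s => indicator (Ioo 0 φ) (fun s => Kfun X₀ X₁ n₀ n₁ f s) s)
        + ENNReal.ofReal (Kfun X₀ X₁ n₀ n₁ f φ) * N (indicator (Ioi φ) 1)
        ≤ (N (fun s => Kfun X₀ X₁ n₀ n₁ g s) + ENNReal.ofReal (n₁ h) * t)
          + (N (fun s => Kfun X₀ X₁ n₀ n₁ g s) + ENNReal.ofReal (n₁ h) * t) :=
          add_le_add term1 term2
      _ = 2 * (N (fun s => Kfun X₀ X₁ n₀ n₁ g s) + t * ENNReal.ofReal (n₁ h)) := by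
          rw [two_mul, mul_comm t]
  -- conclude
  set L := N (fun s => indicator (Ioo 0 φ) (fun s => Kfun X₀ X₁ n₀ n₁ f s) s)
      + ENNReal.ofReal (Kfun X₀ X₁ n₀ n₁ f φ) * N (indicator (Ioi φ) 1) with hL
  have hdiv : L / 2 ≤ sInf {r : ℝ≥0∞ | ∃ g h : Z, f = g + h ∧ g ∈ X₀ ⊔ X₁ ∧ h ∈ X₁ ∧
      r = N (fun s => Kfun X₀ X₁ n₀ n₁ g s) + t * ENNReal.ofReal (n₁ h)} := by
    refine le_sInf fun r hr => ?_
    rw [ENNReal.div_le_iff_le_mul (Or.inl two_ne_zero) (Or.inl ENNReal.ofNat_ne_top)]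
    rw [mul_comm]
    exact key r hr
  calc L = L / 2 * 2 := (ENNReal.div_mul_cancel two_ne_zero ENNReal.ofNat_ne_top).symm
    _ ≤ _ * 2 := mul_le_mul_left hdiv _
    _ = 2 * _ := mul_comm _ _
end
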